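/- For a simplicial group G, the simplicial map H : Diag NG × Δ^1 → Diag NG of the preceding construction is a simplicial homotopy from D_G S_G to id_{Diag NG}: ins_0 H = D_G S_G and ins_1 H = id, where ins_0, ins_1 insert the two vertices of Δ^1. -/

import Mathlib

namespace Paper

/-- clamped coface map `δ^k : [a] → [b]`. -/
def δOH (k a b : ℕ) : Fin (a+1) →o Fin (b+1) where
  toFun i := ⟨min (if (i:ℕ) < k then (i:ℕ) else (i:ℕ)+1) b, Nat.lt_succ_of_le (Nat.min_le_right _ _)⟩
  monotone' := by
    intro i j hij
    have h : (i:ℕ) ≤ (j:ℕ) := hij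
    simp only [Fin.mk_le_mk]
    split_ifs <;> omega

/-- clamped codegeneracy map `σ^k : [a] → [b]`. -/
def σOH (k a b : ℕ) : Fin (a+1) →o Fin (b+1) where
  toFun i := ⟨min (if (i:ℕ) ≤ k then (i:ℕ) else (i:ℕ)-1) b, Nat.lt_succ_of_le (Nat.min_le_right _ _)⟩
  monotone' := by
    intro i j hij
    have h : (i:ℕ) ≤ (j:ℕ) := hij
    simp only [Fin.mk_le_mk]
    split_ifs <;> omega

/-- `τ^k : [n] → [1]`, sending `[0, n-k]` to `0` and the rest to `1`. -/
def τOH (n k : ℕ) : Fin (n+1) →o Fin 2 where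
  toFun i := if (i:ℕ) + k ≤ n then 0 else 1
  monotone' := by
    intro i j hij
    have h : (i:ℕ) ≤ (j:ℕ) := hij
    dsimp only
    split_ifs with h1 h2 h3
    · exact le_refl _
    · exact Fin.zero_le _
    · exact absurd h3 (by omega)
    · exact le_refl _

/-- application of `θ : [m] → [n]` to a natural number (clamped). -/
def fApp {m n : ℕ} (θ : Fin (m+1) →o Fin (n+1)) (x : ℕ) : ℕ :=
  (θ ⟨min x m, Nat.lt_succ_of_le (Nat.min_le_right _ _)⟩ : Fin (n+1))

theorem fApp_mono {m n : ℕ} (θ : Fin (m+1) →o Fin (n+1)) {x y : ℕ} (h : x ≤ y) :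
    fApp θ x ≤ fApp θ y :=
  Fin.le_def.mp (θ.monotone (Fin.mk_le_mk.mpr (by omega)))

theorem fApp_le {m n : ℕ} (θ : Fin (m+1) →o Fin (n+1)) (x : ℕ) : fApp θ x ≤ n :=
  Nat.lt_succ_iff.mp (Fin.isLt _)

theorem fApp_coe {m n : ℕ} (θ : Fin (m+1) →o Fin (n+1)) (p : Fin (m+1)) :
    fApp θ (p:ℕ) = (θ p : ℕ) := by
  have hp : (⟨min (p:ℕ) m, Nat.lt_succ_of_le (Nat.min_le_right _ _)⟩ : Fin (m+1)) = p :=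
    Fin.ext (show min (p:ℕ) m = (p:ℕ) from by have := p.isLt; omega)
  unfold fApp
  rw [hp]

/-- `Spl_{≤ p}(θ) : [p] → [pθ]`. -/
def splLe {m n : ℕ} (θ : Fin (m+1) →o Fin (n+1)) (p : Fin (m+1)) :
    Fin ((p:ℕ)+1) →o Fin ((θ p : ℕ)+1) where
  toFun i := ⟨fApp θ (i:ℕ), by
    have h1 : fApp θ (i:ℕ) ≤ fApp θ (p:ℕ) := fApp_mono θ (by have := i.isLt; omega)
    have h2 : fApp θ (p:ℕ) = (θ p : ℕ) := fApp_coe θ p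
    omega⟩
  monotone' := by
    intro a b hab
    have h : (a:ℕ) ≤ (b:ℕ) := hab
    simp only [Fin.mk_le_mk]
    exact fApp_mono θ h

/-- `Spl_{≥ p}(θ) : [m-p] → [n-pθ]`. -/
def splGe {m n : ℕ} (θ : Fin (m+1) →o Fin (n+1)) (p : Fin (m+1)) :
    Fin (m - (p:ℕ) + 1) →o Fin (n - (θ p : ℕ) + 1) where
  toFun i := ⟨fApp θ ((i:ℕ) + (p:ℕ)) - (θ p : ℕ), by
    have h1 : fApp θ ((i:ℕ) + (p:ℕ)) ≤ n := fApp_le θ _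
    omega⟩
  monotone' := by
    intro a b hab
    have h : (a:ℕ) ≤ (b:ℕ) := hab
    simp only [Fin.mk_le_mk]
    have := fApp_mono θ (show (a:ℕ) + (p:ℕ) ≤ (b:ℕ) + (p:ℕ) by omega)
    omega

/-- the restriction `θ|_[i]^[j] : [i] → [j]` of `θ` (clamped). -/
def restrictOH {m n : ℕ} (θ : Fin (m+1) →o Fin (n+1)) (i j : ℕ) : Fin (i+1) →o Fin (j+1) where
  toFun k := ⟨min (fApp θ (k:ℕ)) j, Nat.lt_succ_of_le (Nat.min_le_right _ _)⟩
  monotone' := by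
    intro a b hab
    have h : (a:ℕ) ≤ (b:ℕ) := hab
    simp only [Fin.mk_le_mk]
    have := fApp_mono θ h
    omega

/-- ascending product `f a * f (a+1) * ⋯ * f (b-1)`. -/
def aProd {γ : Type*} [Monoid γ] (f : ℕ → γ) (a : ℕ) : ℕ → γ
  | 0 => 1
  | b+1 => if a ≤ b then aProd f a b * f b else 1

/-- descending product `f (b-1) * f (b-2) * ⋯ * f a`. -/
def dProd {γ : Type*} [Monoid γ] (f : ℕ → γ) (a : ℕ) : ℕ → γ
  | 0 => 1
  | b+1 => if a ≤ b then f b * dProd f a b else 1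

end Paper
namespace Paper

/-- A simplicial group, given by levels, structure maps, functoriality,
and levelwise multiplicativity. -/
structure SGrp where
  obj : ℕ → Type
  grp : ∀ n, Group (obj n)
  map : ∀ {m n : ℕ}, (Fin (m+1) →o Fin (n+1)) → obj n → obj m
  map_id : ∀ {n : ℕ} (x : obj n), map OrderHom.id x = x
  map_comp : ∀ {l m n : ℕ} (α : Fin (l+1) →o Fin (m+1)) (β : Fin (m+1) →o Fin (n+1)) (x : obj n),
    map α (map β x) = map (β.comp α) x
  map_mul : ∀ {m n : ℕ} (θ : Fin (m+1) →o Fin (n+1)) (x y : obj n),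
    map θ (x * y) = map θ x * map θ y

attribute [instance] SGrp.grp

namespace SGrp

/-- face `d_k : G_N → G_{N-1}` -/
def face (G : SGrp) (k : ℕ) {N : ℕ} : G.obj N → G.obj (N-1) := G.map (δOH k (N-1) N)

/-- degeneracy `s_k : G_M → G_{M+1}` -/
def deg (G : SGrp) (k : ℕ) {M : ℕ} : G.obj M → G.obj (M+1) := G.map (σOH k (M+1) M)

/-- transport between levels (junk value `1` when levels differ). -/
def gcast (G : SGrp) {a : ℕ} (b : ℕ) (x : G.obj a) : G.obj b := if h : a = b then h ▸ x else 1

/-- descending composite of faces `d_{i+c} d_{i+c-1} ⋯ d_{i+1}`. -/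
def dcomp (G : SGrp) : (i c : ℕ) → {N : ℕ} → G.obj N → G.obj (N - c)
  | _, 0, _, x => x
  | i, c+1, _, x => G.face (i+1) (G.dcomp (i+1) c x)

/-- ascending composite of degeneracies `s_i s_{i+1} ⋯ s_{i+c-1}`. -/
def scomp (G : SGrp) : (i c : ℕ) → {M : ℕ} → G.obj M → G.obj (M + c)
  | _, 0, _, x => x
  | i, c+1, _, x => G.deg (i+c) (G.scomp i c x)

/-- `x ↦ x d_j ⋯ d_{i+1} s_i ⋯ s_{j-1}`, an endomap of `G_N`. -/
def ds (G : SGrp) (i j : ℕ) {N : ℕ} (x : G.obj N) : G.obj N :=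
  G.gcast N (G.scomp i (min (j - i) N) (G.dcomp i (min (j - i) N) x))

/-- `x ↦ x d_j ⋯ d_{i+1} s_i ⋯ s_{n-1} : G_j → G_n`. -/
def dsTo (G : SGrp) (i n : ℕ) {j : ℕ} (x : G.obj j) : G.obj n :=
  G.gcast n (G.scomp i (n - i) (G.gcast i (G.dcomp i (j - i) x)))

/-- the `y_i` of the section `S_G`, defined by descending recursion (with fuel). -/
def yAux (G : SGrp) (n : ℕ) (g : ∀ j : ℕ, G.obj j) : ℕ → ℕ → G.obj n
  | 0, _ => 1
  | fuel+1, i =>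
      aProd (fun j => G.ds i j (G.yAux n g fuel j)⁻¹) (i+1) n *
      dProd (fun j => G.dsTo i n (g j)) i n

/-- `W̄_n G = ∏_{j = n-1}^{0} G_j`. -/
def WbarN (G : SGrp) (n : ℕ) : Type := ∀ j : Fin n, G.obj (j:ℕ)

/-- extension of a tuple in `W̄_n G` by `1`. -/
def gE (G : SGrp) {n : ℕ} (g : G.WbarN n) : ∀ j : ℕ, G.obj j :=
  fun j => if h : j < n then g ⟨j, h⟩ else 1

/-- the coretraction `(S_G)_n : W̄_n G → Diag_n NG = (G_n)^n`. -/
def SGn (G : SGrp) (n : ℕ) (g : G.WbarN n) : Fin n → G.obj n :=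
  fun i => G.yAux n (G.gE g) n (i:ℕ)

/-- extension of a tuple in `(G_n)^n` by `1`. -/
def xE (G : SGrp) {n : ℕ} (x : Fin n → G.obj n) : ℕ → G.obj n :=
  fun j => if h : j < n then x ⟨j, h⟩ else 1

/-- the structure map `W̄_θ : W̄_n G → W̄_m G` of the Kan classifying simplicial set. -/
def wbarMap (G : SGrp) {m n : ℕ} (θ : Fin (m+1) →o Fin (n+1)) (g : G.WbarN n) : G.WbarN m :=
  fun i => dProd (fun j => G.map (restrictOH θ (i:ℕ) j) (G.gE g j))
    ((θ i.castSucc : Fin (n+1)) : ℕ) ((θ i.succ : Fin (n+1)) : ℕ)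

/-- the structure map `(Diag NG)_θ : (G_n)^n → (G_m)^m` of the diagonal of the nerve. -/
def diagMap (G : SGrp) {m n : ℕ} (θ : Fin (m+1) →o Fin (n+1)) (x : Fin n → G.obj n) :
    Fin m → G.obj m :=
  fun i => dProd (fun j => G.map θ (G.xE x j))
    ((θ i.castSucc : Fin (n+1)) : ℕ) ((θ i.succ : Fin (n+1)) : ℕ)

/-- the retraction `(D_G)_n : Diag_n NG → W̄_n G`, `(g_i)_i ↦ (g_i d_n ⋯ d_{i+1})_i`. -/
def DGn (G : SGrp) (n : ℕ) (x : Fin n → G.obj n) : G.WbarN n :=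
  fun i => G.gcast (i:ℕ) (G.dcomp (i:ℕ) (n - (i:ℕ)) (x i))

/-- the components `y_i^{(n+1-k)}` of the homotopy `H`, by descending recursion (with fuel). -/
def hAux (G : SGrp) (n k : ℕ) (g : ℕ → G.obj n) : ℕ → ℕ → G.obj n
  | 0, _ => 1
  | fuel+1, i =>
      if k ≤ i + 1 then g i
      else
        aProd (fun j => G.ds i j (G.hAux n k g fuel j)⁻¹) (i+1) (k-1) *
        dProd (fun j => G.ds i (k-1) (g j)) i (k-1)

end SGrp

/-- recover `k` from the simplex `τ^{n+1-k} ∈ Δ^1_n`: the number of vertices sent to `0`. -/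
def kOf {n : ℕ} (t : Fin (n+1) →o Fin 2) : ℕ :=
  (Finset.univ.filter (fun i => t i = 0)).card

namespace SGrp

/-- the homotopy `H_n : Diag_n NG × Δ^1_n → Diag_n NG`. -/
def Hn (G : SGrp) (n : ℕ) (x : Fin n → G.obj n) (t : Fin (n+1) →o Fin 2) : Fin n → G.obj n :=
  fun i => G.hAux n (kOf t) (G.xE x) (n+1) (i:ℕ)

end SGrp

/-- morphisms of simplicial groups. -/
structure SGrpHom (G G' : SGrp) where
  app : ∀ n, G.obj n → G'.obj n
  comm : ∀ {m n : ℕ} (θ : Fin (m+1) →o Fin (n+1)) (x : G.obj n),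
    app m (G.map θ x) = G'.map θ (app n x)
  mul : ∀ (n : ℕ) (x y : G.obj n), app n (x * y) = app n x * app n y

end Paper
namespace Paper

/-! ### basic order-hom infrastructure -/

theorem OH_ext {a b : ℕ} {θ₁ θ₂ : Fin (a+1) →o Fin (b+1)}
    (h : ∀ p : Fin (a+1), ((θ₁ p : ℕ)) = ((θ₂ p : ℕ))) : θ₁ = θ₂ := by
  apply OrderHom.ext; funext p; exact Fin.ext (h p)

@[simp] theorem δOH_coe (k a b : ℕ) (p : Fin (a+1)) :
    ((δOH k a b p : ℕ)) = min (if (p:ℕ) < k then (p:ℕ) else (p:ℕ)+1) b := rfl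

@[simp] theorem σOH_coe (k a b : ℕ) (p : Fin (a+1)) :
    ((σOH k a b p : ℕ)) = min (if (p:ℕ) ≤ k then (p:ℕ) else (p:ℕ)-1) b := rfl

@[simp] theorem τOH_coe (n k : ℕ) (p : Fin (n+1)) :
    ((τOH n k p : ℕ)) = if (p:ℕ) + k ≤ n then 0 else 1 := by
  unfold τOH
  show ((if (p:ℕ) + k ≤ n then (0 : Fin 2) else 1 : Fin 2) : ℕ) = _
  split_ifs <;> rfl

/-- the `ds` composite order-hom. -/
def dsOH (i c N : ℕ) : Fin (N+1) →o Fin (N+1) where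
  toFun p := ⟨if (p:ℕ) ≤ i + c then min (min (p:ℕ) i) N else (p:ℕ), by
    have := p.isLt; split_ifs <;> omega⟩
  monotone' := by
    intro p q hpq
    have h : (p:ℕ) ≤ (q:ℕ) := hpq
    have := q.isLt
    simp only [Fin.mk_le_mk]
    split_ifs <;> omega

@[simp] theorem dsOH_coe (i c N : ℕ) (p : Fin (N+1)) :
    ((dsOH i c N p : ℕ)) = if (p:ℕ) ≤ i + c then min (min (p:ℕ) i) N else (p:ℕ) := rfl

/-- the `dcomp` composite order-hom. -/
def dcompOH (i c N : ℕ) : Fin (N-c+1) →o Fin (N+1) where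
  toFun p := ⟨min (if (p:ℕ) ≤ i then (p:ℕ) else (p:ℕ)+c) N, by omega⟩
  monotone' := by
    intro p q hpq
    have h : (p:ℕ) ≤ (q:ℕ) := hpq
    simp only [Fin.mk_le_mk]
    split_ifs <;> omega

@[simp] theorem dcompOH_coe (i c N : ℕ) (p : Fin (N-c+1)) :
    ((dcompOH i c N p : ℕ)) = min (if (p:ℕ) ≤ i then (p:ℕ) else (p:ℕ)+c) N := rfl

/-- the `scomp` composite order-hom. -/
def scompOH (i c M : ℕ) : Fin (M+c+1) →o Fin (M+1) where
  toFun p := ⟨min (if (p:ℕ) ≤ i + c then min (p:ℕ) i else (p:ℕ)-c) M, by omega⟩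
  monotone' := by
    intro p q hpq
    have h : (p:ℕ) ≤ (q:ℕ) := hpq
    simp only [Fin.mk_le_mk]
    split_ifs <;> omega

@[simp] theorem scompOH_coe (i c M : ℕ) (p : Fin (M+c+1)) :
    ((scompOH i c M p : ℕ)) = min (if (p:ℕ) ≤ i + c then min (p:ℕ) i else (p:ℕ)-c) M := rfl

namespace SGrp

variable (G : SGrp)

theorem map_one {m n : ℕ} (θ : Fin (m+1) →o Fin (n+1)) : G.map θ 1 = 1 := by
  have := G.map_mul θ 1 1
  rw [mul_one] at this
  exact (mul_eq_left.mp this.symm)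

theorem map_inv {m n : ℕ} (θ : Fin (m+1) →o Fin (n+1)) (x : G.obj n) :
    G.map θ x⁻¹ = (G.map θ x)⁻¹ := by
  have := G.map_mul θ x x⁻¹
  rw [mul_inv_cancel] at this
  rw [G.map_one] at this
  exact (inv_eq_of_mul_eq_one_right this.symm).symm

theorem map_congr {m n : ℕ} {θ₁ θ₂ : Fin (m+1) →o Fin (n+1)}
    (h : ∀ p : Fin (m+1), ((θ₁ p : ℕ)) = ((θ₂ p : ℕ))) (x : G.obj n) :
    G.map θ₁ x = G.map θ₂ x := by rw [OH_ext h]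

theorem map_eq_self {n : ℕ} {θ : Fin (n+1) →o Fin (n+1)}
    (h : ∀ p : Fin (n+1), ((θ p : ℕ)) = (p:ℕ)) (x : G.obj n) : G.map θ x = x := by
  rw [G.map_congr (θ₂ := OrderHom.id) h, G.map_id]

/-- master composition lemma: `map θ₁ (map θ₂ x) = map θ₃ x`. -/
theorem map_map {a b c : ℕ} (θ₁ : Fin (a+1) →o Fin (b+1)) (θ₂ : Fin (b+1) →o Fin (c+1))
    (θ₃ : Fin (a+1) →o Fin (c+1)) (h : ∀ p : Fin (a+1), ((θ₂ (θ₁ p) : ℕ)) = ((θ₃ p : ℕ)))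
    (x : G.obj c) : G.map θ₁ (G.map θ₂ x) = G.map θ₃ x := by
  rw [G.map_comp]; exact G.map_congr h x

/-- master swap lemma: `map θ₁ (map θ₂ x) = map θ₃ (map θ₄ x)`. -/
theorem map_swap {a b c d : ℕ} (θ₁ : Fin (a+1) →o Fin (b+1)) (θ₂ : Fin (b+1) →o Fin (c+1))
    (θ₃ : Fin (a+1) →o Fin (d+1)) (θ₄ : Fin (d+1) →o Fin (c+1))
    (h : ∀ p : Fin (a+1), ((θ₂ (θ₁ p) : ℕ)) = ((θ₄ (θ₃ p) : ℕ)))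
    (x : G.obj c) : G.map θ₁ (G.map θ₂ x) = G.map θ₃ (G.map θ₄ x) := by
  rw [G.map_comp, G.map_comp]; exact G.map_congr h x

/-- eliminating `gcast` over a `map`. -/
theorem gcast_map {a b n : ℕ} (h : a = b) (θ : Fin (a+1) →o Fin (n+1))
    (θ' : Fin (b+1) →o Fin (n+1))
    (hθ : ∀ (p : ℕ) (hp : p < a+1) (hp' : p < b+1), ((θ ⟨p, hp⟩ : ℕ)) = ((θ' ⟨p, hp'⟩ : ℕ)))
    (x : G.obj n) : G.gcast b (G.map θ x) = G.map θ' x := by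
  subst h
  unfold gcast
  rw [dif_pos rfl]
  exact G.map_congr (fun p => by simpa using hθ p p.isLt p.isLt) x

theorem gcast_rfl {a : ℕ} (x : G.obj a) : G.gcast a x = x := by
  unfold gcast; rw [dif_pos rfl]

end SGrp
end Paper
namespace Paper

/-! ### product lemmas -/

section Prod
variable {γ : Type*} [Monoid γ]

theorem dProd_stop (f : ℕ → γ) {a b : ℕ} (h : b ≤ a) : dProd f a b = 1 := by
  cases b with
  | zero => rfl
  | succ b => unfold dProd; rw [if_neg (by omega)]

theorem dProd_succ (f : ℕ → γ) {a b : ℕ} (h : a ≤ b) : dProd f a (b+1) = f b * dProd f a b := by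
  show (if a ≤ b then f b * dProd f a b else 1) = _
  rw [if_pos h]

theorem aProd_stop (f : ℕ → γ) {a b : ℕ} (h : b ≤ a) : aProd f a b = 1 := by
  cases b with
  | zero => rfl
  | succ b => unfold aProd; rw [if_neg (by omega)]

theorem aProd_succ (f : ℕ → γ) {a b : ℕ} (h : a ≤ b) : aProd f a (b+1) = aProd f a b * f b := by
  show (if a ≤ b then aProd f a b * f b else 1) = _
  rw [if_pos h]

theorem dProd_single (f : ℕ → γ) (a : ℕ) : dProd f a (a+1) = f a := by
  rw [dProd_succ f le_rfl, dProd_stop f le_rfl, mul_one]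

theorem dProd_pair (f : ℕ → γ) (a : ℕ) : dProd f a (a+2) = f (a+1) * f a := by
  rw [dProd_succ f (by omega), dProd_single]

theorem dProd_congr {f g : ℕ → γ} {a b : ℕ} (h : ∀ j, a ≤ j → j < b → f j = g j) :
    dProd f a b = dProd g a b := by
  induction b with
  | zero => rfl
  | succ b ih =>
    by_cases hab : a ≤ b
    · rw [dProd_succ f hab, dProd_succ g hab, h b hab (by omega),
        ih (fun j h1 h2 => h j h1 (by omega))]
    · rw [dProd_stop f (by omega), dProd_stop g (by omega)]

theorem aProd_congr {f g : ℕ → γ} {a b : ℕ} (h : ∀ j, a ≤ j → j < b → f j = g j) :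
    aProd f a b = aProd g a b := by
  induction b with
  | zero => rfl
  | succ b ih =>
    by_cases hab : a ≤ b
    · rw [aProd_succ f hab, aProd_succ g hab, h b hab (by omega),
        ih (fun j h1 h2 => h j h1 (by omega))]
    · rw [aProd_stop f (by omega), aProd_stop g (by omega)]

theorem dProd_split (f : ℕ → γ) {a b c : ℕ} (h1 : a ≤ b) (h2 : b ≤ c) :
    dProd f a c = dProd f b c * dProd f a b := by
  induction c with
  | zero =>
    have hb : b = 0 := by omega
    have ha : a = 0 := by omega
    subst hb; subst ha; simp [dProd]
  | succ c ih =>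
    by_cases hbc : b ≤ c
    · rw [dProd_succ f (by omega), dProd_succ f hbc, ih hbc, mul_assoc]
    · have : b = c + 1 := by omega
      subst this
      rw [dProd_stop f le_rfl, one_mul]

theorem aProd_split (f : ℕ → γ) {a b c : ℕ} (h1 : a ≤ b) (h2 : b ≤ c) :
    aProd f a c = aProd f a b * aProd f b c := by
  induction c with
  | zero =>
    have hb : b = 0 := by omega
    have ha : a = 0 := by omega
    subst hb; subst ha; simp [aProd]
  | succ c ih =>
    by_cases hbc : b ≤ c
    · rw [aProd_succ f (by omega), aProd_succ f hbc, ih hbc, mul_assoc]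
    · have : b = c + 1 := by omega
      subst this
      rw [aProd_stop f le_rfl, mul_one]

theorem dProd_shift (f : ℕ → γ) (a b : ℕ) :
    dProd f (a+1) (b+1) = dProd (fun j => f (j+1)) a b := by
  induction b with
  | zero => rw [dProd_stop f (by omega)]; rfl
  | succ b ih =>
    by_cases hab : a ≤ b
    · rw [dProd_succ f (by omega), dProd_succ _ hab, ih]
    · rw [dProd_stop f (by omega), dProd_stop _ (by omega)]

theorem aProd_shift (f : ℕ → γ) (a b : ℕ) :
    aProd f (a+1) (b+1) = aProd (fun j => f (j+1)) a b := by
  induction b with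
  | zero => rw [aProd_stop f (by omega)]; rfl
  | succ b ih =>
    by_cases hab : a ≤ b
    · rw [aProd_succ f (by omega), aProd_succ _ hab, ih]
    · rw [aProd_stop f (by omega), aProd_stop _ (by omega)]

end Prod

section ProdGrp
variable {γ : Type*} [Group γ]

theorem aProd_inv (f : ℕ → γ) (a b : ℕ) :
    (aProd f a b)⁻¹ = dProd (fun j => (f j)⁻¹) a b := by
  induction b with
  | zero => simp [aProd, dProd]
  | succ b ih =>
    by_cases hab : a ≤ b
    · rw [aProd_succ f hab, dProd_succ _ hab, mul_inv_rev, ih]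
    · rw [aProd_stop f (by omega), dProd_stop _ (by omega), inv_one]

end ProdGrp

namespace SGrp
variable (G : SGrp)

theorem map_dProd {m n : ℕ} (θ : Fin (m+1) →o Fin (n+1)) (f : ℕ → G.obj n) (a b : ℕ) :
    G.map θ (dProd f a b) = dProd (fun j => G.map θ (f j)) a b := by
  induction b with
  | zero => simpa [dProd] using G.map_one θ
  | succ b ih =>
    by_cases hab : a ≤ b
    · rw [dProd_succ f hab, dProd_succ _ hab, G.map_mul, ih]
    · rw [dProd_stop f (by omega), dProd_stop _ (by omega)]; exact G.map_one θ

theorem map_aProd {m n : ℕ} (θ : Fin (m+1) →o Fin (n+1)) (f : ℕ → G.obj n) (a b : ℕ) :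
    G.map θ (aProd f a b) = aProd (fun j => G.map θ (f j)) a b := by
  induction b with
  | zero => simpa [aProd] using G.map_one θ
  | succ b ih =>
    by_cases hab : a ≤ b
    · rw [aProd_succ f hab, aProd_succ _ hab, G.map_mul, ih]
    · rw [aProd_stop f (by omega), aProd_stop _ (by omega)]; exact G.map_one θ

/-! ### map forms of `dcomp`, `scomp`, `ds`, `dsTo` -/

theorem dcomp_eq {N : ℕ} (i c : ℕ) (x : G.obj N) :
    G.dcomp i c x = G.map (dcompOH i c N) x := by
  induction c generalizing i with
  | zero =>
    refine (G.map_eq_self (fun p => ?_) x).symm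
    have := p.isLt
    have key : min (if (p:ℕ) ≤ i then (p:ℕ) else (p:ℕ)+0) N = (p:ℕ) := by
      split_ifs <;> omega
    exact rfl.trans key
  | succ c ih =>
    show G.face (i+1) (G.dcomp (i+1) c x) = _
    rw [ih]
    unfold face
    refine G.map_map _ _ _ (fun p => ?_) x
    have := p.isLt
    have key : min (if (min (if (p:ℕ) < i+1 then (p:ℕ) else (p:ℕ)+1) (N-c)) ≤ (i+1)
          then (min (if (p:ℕ) < i+1 then (p:ℕ) else (p:ℕ)+1) (N-c))
          else (min (if (p:ℕ) < i+1 then (p:ℕ) else (p:ℕ)+1) (N-c)) + c) N =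
        min (if (p:ℕ) ≤ i then (p:ℕ) else (p:ℕ)+(c+1)) N := by
      split_ifs <;> omega
    exact (rfl.trans key).trans rfl

theorem scomp_eq {M : ℕ} (i c : ℕ) (hi : i ≤ M) (x : G.obj M) :
    G.scomp i c x = G.map (scompOH i c M) x := by
  induction c with
  | zero =>
    refine (G.map_eq_self (fun p => ?_) x).symm
    have := p.isLt
    have key : min (if (p:ℕ) ≤ i + 0 then min (p:ℕ) i else (p:ℕ)-0) M = (p:ℕ) := by
      split_ifs <;> omega
    exact rfl.trans key
  | succ c ih =>
    show G.deg (i+c) (G.scomp i c x) = _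
    rw [ih]
    unfold deg
    refine G.map_map _ _ _ (fun p => ?_) x
    have := p.isLt
    have key : min (if (min (if (p:ℕ) ≤ i+c then (p:ℕ) else (p:ℕ)-1) (M+c)) ≤ i + c
          then min (min (if (p:ℕ) ≤ i+c then (p:ℕ) else (p:ℕ)-1) (M+c)) i
          else (min (if (p:ℕ) ≤ i+c then (p:ℕ) else (p:ℕ)-1) (M+c)) - c) M =
        min (if (p:ℕ) ≤ i + (c+1) then min (p:ℕ) i else (p:ℕ)-(c+1)) M := by
      split_ifs <;> omega
    exact (rfl.trans key).trans rfl

theorem ds_eq {N : ℕ} (i j : ℕ) (hij : i ≤ j) (hj : j ≤ N) (x : G.obj N) :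
    G.ds i j x = G.map (dsOH i (j-i) N) x := by
  unfold ds
  have hc : min (j - i) N = j - i := by omega
  rw [hc, G.dcomp_eq]
  rw [G.scomp_eq i (j-i) (by omega)]
  rw [G.map_comp]
  refine G.gcast_map (by omega) _ _ (fun p hp hp' => ?_) x
  simp only [OrderHom.comp_coe, Function.comp_apply, dcompOH_coe, scompOH_coe, dsOH_coe]
  split_ifs <;> omega

end SGrp
end Paper
namespace Paper

/-- inclusion-style order hom. -/
def inclOH (a b : ℕ) : Fin (a+1) →o Fin (b+1) where
  toFun p := ⟨min (p:ℕ) b, by omega⟩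
  monotone' := by intro p q h; have : (p:ℕ) ≤ q := h; simp only [Fin.mk_le_mk]; omega

@[simp] theorem inclOH_coe (a b : ℕ) (p : Fin (a+1)) :
    ((inclOH a b p : ℕ)) = min (p:ℕ) b := rfl

/-! ### `kOf` -/

theorem kOf_le {n : ℕ} (t : Fin (n+1) →o Fin 2) : kOf t ≤ n + 1 := by
  unfold kOf
  calc (Finset.univ.filter (fun i => t i = 0)).card ≤ Finset.univ.card :=
        Finset.card_filter_le _ _
    _ = n + 1 := by rw [Finset.card_univ, Fintype.card_fin]

theorem kOf_lt_iff {n : ℕ} (t : Fin (n+1) →o Fin 2) (j : Fin (n+1)) :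
    t j = 0 ↔ (j:ℕ) < kOf t := by
  constructor
  · intro h
    have hsub : Finset.Iic j ⊆ Finset.univ.filter (fun i => t i = 0) := by
      intro i hi
      rw [Finset.mem_Iic] at hi
      rw [Finset.mem_filter]
      refine ⟨Finset.mem_univ _, ?_⟩
      have := t.monotone hi
      rw [h] at this
      exact Fin.le_zero_iff.mp this
    have := Finset.card_le_card hsub
    rw [Fin.card_Iic] at this
    exact this
  · intro h
    by_contra hne
    have hsub : Finset.univ.filter (fun i => t i = 0) ⊆ Finset.Iio j := by
      intro i hi
      rw [Finset.mem_filter] at hi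
      rw [Finset.mem_Iio]
      by_contra hji
      have hji' : j ≤ i := by omega
      have := t.monotone hji'
      rw [hi.2] at this
      exact hne (Fin.le_zero_iff.mp this)
    have := Finset.card_le_card hsub
    rw [Fin.card_Iio] at this
    unfold kOf at h
    omega

theorem card_filter_lt (m c : ℕ) :
    (Finset.univ.filter (fun p : Fin (m+1) => (p:ℕ) < c)).card = min c (m+1) := by
  by_cases hc : c ≤ m
  · have : (Finset.univ.filter (fun p : Fin (m+1) => (p:ℕ) < c)) =
        Finset.Iio (⟨c, by omega⟩ : Fin (m+1)) := by
      ext p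
      simp [Finset.mem_Iio, Fin.lt_def]
    rw [this, Fin.card_Iio]
    simp only []
    omega
  · have : (Finset.univ.filter (fun p : Fin (m+1) => (p:ℕ) < c)) = Finset.univ := by
      apply Finset.filter_true_of_mem
      intro p _
      have := p.isLt
      omega
    rw [this, Finset.card_univ, Fintype.card_fin]
    omega

theorem kOf_comp {m n : ℕ} (t : Fin (n+1) →o Fin 2) (θ : Fin (m+1) →o Fin (n+1)) :
    kOf (t.comp θ) = (Finset.univ.filter (fun p : Fin (m+1) => ((θ p : ℕ)) < kOf t)).card := by
  unfold kOf
  congr 1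
  ext p
  simp only [Finset.mem_filter, Finset.mem_univ, true_and, OrderHom.comp_coe,
    Function.comp_apply]
  rw [kOf_lt_iff]
  exact Iff.rfl

theorem kOf_tau0 (n : ℕ) : kOf (τOH n 0) = n + 1 := by
  unfold kOf
  rw [Finset.filter_true_of_mem, Finset.card_univ, Fintype.card_fin]
  intro i _
  apply Fin.ext
  rw [τOH_coe]
  have := i.isLt
  simp only [Fin.val_zero]
  rw [if_pos (by omega)]

theorem kOf_tautop (n : ℕ) : kOf (τOH n (n+1)) = 0 := by
  unfold kOf
  rw [Finset.card_eq_zero]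
  apply Finset.filter_false_of_mem
  intro i _
  intro h
  have : ((τOH n (n+1) i : ℕ)) = 0 := by rw [h]; rfl
  rw [τOH_coe, if_neg (by omega)] at this
  exact absurd this (by omega)

namespace SGrp
variable (G : SGrp)

/-! ### fuel-free `hAux` -/

theorem hAux_succ (n k : ℕ) (g : ℕ → G.obj n) (F i : ℕ) :
    G.hAux n k g (F+1) i = if k ≤ i + 1 then g i
      else aProd (fun j => G.ds i j (G.hAux n k g F j)⁻¹) (i+1) (k-1) *
        dProd (fun j => G.ds i (k-1) (g j)) i (k-1) := rfl

theorem yAux_succ (n : ℕ) (g : ∀ j : ℕ, G.obj j) (F i : ℕ) :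
    G.yAux n g (F+1) i = aProd (fun j => G.ds i j (G.yAux n g F j)⁻¹) (i+1) n *
      dProd (fun j => G.dsTo i n (g j)) i n := rfl

theorem hAux_stab (n k : ℕ) (g : ℕ → G.obj n) :
    ∀ (F F' i : ℕ), 1 ≤ F → 1 ≤ F' → k ≤ F + i + 1 → k ≤ F' + i + 1 →
      G.hAux n k g F i = G.hAux n k g F' i := by
  intro F
  induction F with
  | zero => intro F' i h1; omega
  | succ a ih =>
    intro F' i h1 h2 h3 h4
    cases F' with
    | zero => omega
    | succ b =>
      rw [G.hAux_succ, G.hAux_succ]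
      by_cases hk : k ≤ i + 1
      · rw [if_pos hk, if_pos hk]
      · rw [if_neg hk, if_neg hk]
        congr 1
        apply aProd_congr
        intro j hj1 hj2
        congr 2
        apply ih
        all_goals omega

/-- the canonical (fuel-free) components of the homotopy. -/
def Hh (G : SGrp) (n k : ℕ) (g : ℕ → G.obj n) (i : ℕ) : G.obj n := G.hAux n k g (k+1) i

theorem Hh_eq_hAux (n k : ℕ) (g : ℕ → G.obj n) (F i : ℕ) (h1 : 1 ≤ F) (h2 : k ≤ F + i + 1) :
    G.hAux n k g F i = G.Hh n k g i :=
  G.hAux_stab n k g F (k+1) i h1 (by omega) h2 (by omega)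

theorem Hh_low {n k : ℕ} {g : ℕ → G.obj n} {i : ℕ} (h : k ≤ i + 1) : G.Hh n k g i = g i := by
  unfold Hh
  rw [G.hAux_succ, if_pos h]

theorem Hh_high {n k : ℕ} {g : ℕ → G.obj n} {i : ℕ} (h : i + 1 < k) :
    G.Hh n k g i = aProd (fun j => G.ds i j (G.Hh n k g j)⁻¹) (i+1) (k-1) *
      dProd (fun j => G.ds i (k-1) (g j)) i (k-1) := by
  unfold Hh
  rw [G.hAux_succ, if_neg (by omega)]
  congr 1
  apply aProd_congr
  intro j hj1 hj2
  congr 2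
  exact G.Hh_eq_hAux n k g k j (by omega) (by omega)

theorem Hn_eq (n : ℕ) (x : Fin n → G.obj n) (t : Fin (n+1) →o Fin 2) (i : Fin n) :
    G.Hn n x t i = G.Hh n (kOf t) (G.xE x) (i:ℕ) :=
  G.Hh_eq_hAux n (kOf t) (G.xE x) (n+1) (i:ℕ) (by omega) (by have := kOf_le t; omega)

theorem xE_lt {n : ℕ} (x : Fin n → G.obj n) {j : ℕ} (h : j < n) : G.xE x j = x ⟨j, h⟩ := by
  unfold xE
  rw [dif_pos h]

theorem xE_ge {n : ℕ} (x : Fin n → G.obj n) {j : ℕ} (h : ¬ j < n) : G.xE x j = 1 := by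
  unfold xE
  rw [dif_neg h]

/-! ### part 3 -/

theorem part3 (n : ℕ) (x : Fin n → G.obj n) : G.Hn n x (τOH n (n+1)) = x := by
  funext i
  rw [G.Hn_eq, kOf_tautop, G.Hh_low (by omega), G.xE_lt x i.isLt]

/-! ### part 2 -/

theorem dsTo_DGn {n : ℕ} (x : Fin n → G.obj n) (i j : ℕ) (hij : i ≤ j) (hj : j < n) :
    G.dsTo i n (G.gE (G.DGn n x) j) = G.ds i n (G.xE x j) := by
  have hgE : G.gE (G.DGn n x) j = G.map (inclOH j n) (x ⟨j, hj⟩) := by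
    unfold gE DGn
    rw [dif_pos hj]
    show G.gcast j (G.dcomp j (n - j) (x ⟨j, hj⟩)) = _
    rw [G.dcomp_eq]
    refine G.gcast_map (by omega) _ _ (fun p hp hp' => ?_) _
    have hpj : p ≤ j := by omega
    have key : min (if p ≤ j then p else p + (n-j)) n = min p n := by
      split_ifs <;> omega
    exact (rfl.trans key).trans rfl
  rw [hgE]
  unfold dsTo
  rw [G.dcomp_eq, G.map_comp]
  have e1 : G.gcast i (G.map ((inclOH j n).comp (dcompOH i (j-i) j)) (x ⟨j, hj⟩)) =
      G.map (inclOH i n) (x ⟨j, hj⟩) := by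
    refine G.gcast_map (by omega) _ _ (fun p hp hp' => ?_) _
    have hpi : p ≤ i := by omega
    have key : min (min (if p ≤ i then p else p + (j-i)) j) n = min p n := by
      split_ifs <;> omega
    exact (rfl.trans key).trans rfl
  rw [e1]
  rw [G.scomp_eq i (n-i) le_rfl, G.map_comp]
  have e2 : G.gcast n (G.map ((inclOH i n).comp (scompOH i (n-i) i)) (x ⟨j, hj⟩)) =
      G.map (dsOH i (n-i) n) (x ⟨j, hj⟩) := by
    refine G.gcast_map (by omega) _ _ (fun p hp hp' => ?_) _
    have hpn : p ≤ i + (n - i) := by omega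
    have key : min (min (if p ≤ i + (n-i) then min p i else p - (n-i)) i) n =
        (if p ≤ i + (n-i) then min (min p i) n else p) := by
      split_ifs <;> omega
    exact (rfl.trans key).trans rfl
  rw [e2]
  rw [G.ds_eq i n (by omega) le_rfl, G.xE_lt x hj]

theorem y_eq_h {n : ℕ} (x : Fin n → G.obj n) :
    ∀ F i, G.yAux n (G.gE (G.DGn n x)) F i = G.hAux n (n+1) (G.xE x) F i := by
  intro F
  induction F with
  | zero => intro i; rfl
  | succ F ih =>
    intro i
    rw [G.yAux_succ, G.hAux_succ]
    by_cases hi : n ≤ i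
    · rw [if_pos (by omega)]
      rw [aProd_stop _ (by omega), dProd_stop _ (by omega), one_mul, G.xE_ge x (by omega)]
    · rw [if_neg (by omega)]
      have hb : n + 1 - 1 = n := by omega
      rw [hb]
      congr 1
      · apply aProd_congr
        intro j hj1 hj2
        rw [ih j]
      · apply dProd_congr
        intro j hj1 hj2
        exact G.dsTo_DGn x i j hj1 hj2

theorem part2 (n : ℕ) (x : Fin n → G.obj n) : G.Hn n x (τOH n 0) = G.SGn n (G.DGn n x) := by
  funext i
  rw [G.Hn_eq, kOf_tau0]
  unfold SGn
  rw [G.y_eq_h x n (i:ℕ)]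
  exact (G.Hh_eq_hAux n (n+1) (G.xE x) n (i:ℕ) (by have := i.isLt; omega) (by omega)).symm

end SGrp
end Paper
namespace Paper
namespace SGrp
variable (G : SGrp)

/-! ### `diagMap` functoriality -/

theorem diagMap_def {m n : ℕ} (θ : Fin (m+1) →o Fin (n+1)) (x : Fin n → G.obj n) (i : Fin m) :
    G.diagMap θ x i = dProd (fun j => G.map θ (G.xE x j))
      ((θ i.castSucc : Fin (n+1)) : ℕ) ((θ i.succ : Fin (n+1)) : ℕ) := rfl

theorem diagMap_eq_self {n : ℕ} (θ : Fin (n+1) →o Fin (n+1))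
    (hθ : ∀ p : Fin (n+1), ((θ p : ℕ)) = (p : ℕ)) (x : Fin n → G.obj n) :
    G.diagMap θ x = x := by
  funext i
  rw [G.diagMap_def, hθ, hθ, Fin.coe_castSucc, Fin.val_succ, dProd_single,
    G.map_eq_self hθ, G.xE_lt x i.isLt]

theorem diagMap_comp {l m n : ℕ} (α : Fin (l+1) →o Fin (m+1)) (β : Fin (m+1) →o Fin (n+1))
    (x : Fin n → G.obj n) :
    G.diagMap α (G.diagMap β x) = G.diagMap (β.comp α) x := by
  have inner : ∀ (d a' b' : ℕ), b' = a' + d → b' ≤ m →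
      dProd (fun j' => G.map α (G.xE (G.diagMap β x) j')) a' b' =
      dProd (fun j => G.map (β.comp α) (G.xE x j)) (fApp β a') (fApp β b') := by
    intro d
    induction d with
    | zero =>
      intro a' b' h1 h2
      subst h1
      rw [dProd_stop _ le_rfl, dProd_stop _ le_rfl]
    | succ d ih =>
      intro a' b' h1 h2
      have hb : b' = (a' + d) + 1 := by omega
      subst hb
      rw [dProd_succ _ (by omega)]
      rw [ih a' (a' + d) rfl (by omega)]
      have hbm : a' + d < m := by omega
      rw [G.xE_lt (G.diagMap β x) hbm, G.diagMap_def, G.map_dProd]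
      have hcs : ((Fin.castSucc (⟨a' + d, hbm⟩ : Fin m)) : ℕ) = a' + d := rfl
      have hsc : ((Fin.succ (⟨a' + d, hbm⟩ : Fin m)) : ℕ) = a' + d + 1 := rfl
      have e1 : ((β (Fin.castSucc (⟨a' + d, hbm⟩ : Fin m)) : ℕ)) = fApp β (a' + d) := by
        rw [← fApp_coe β]; congr 1
      have e2 : ((β (Fin.succ (⟨a' + d, hbm⟩ : Fin m)) : ℕ)) = fApp β (a' + d + 1) := by
        rw [← fApp_coe β]; congr 1
      rw [e1, e2]
      have e3 : dProd (fun j => G.map α (G.map β (G.xE x j))) (fApp β (a'+d)) (fApp β (a'+d+1))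
          = dProd (fun j => G.map (β.comp α) (G.xE x j)) (fApp β (a'+d)) (fApp β (a'+d+1)) := by
        apply dProd_congr
        intro j _ _
        rw [G.map_comp]
      rw [e3]
      rw [← dProd_split _ (fApp_mono β (by omega)) (fApp_mono β (by omega))]
  funext i
  rw [G.diagMap_def, G.diagMap_def]
  have hcs : ((α i.castSucc : Fin (m+1)) : ℕ) ≤ ((α i.succ : Fin (m+1)) : ℕ) :=
    α.monotone (le_of_lt (Fin.castSucc_lt_succ (i := i)))
  have hbm : ((α i.succ : Fin (m+1)) : ℕ) ≤ m := by
    have := (α i.succ).isLt; omega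
  rw [inner (((α i.succ : Fin (m+1)) : ℕ) - ((α i.castSucc : Fin (m+1)) : ℕ)) _ _
    (by omega) hbm]
  have e1 : fApp β ((α i.castSucc : Fin (m+1)) : ℕ) = (((β.comp α) i.castSucc : Fin (n+1)) : ℕ) := by
    rw [fApp_coe β]; rfl
  have e2 : fApp β ((α i.succ : Fin (m+1)) : ℕ) = (((β.comp α) i.succ : Fin (n+1)) : ℕ) := by
    rw [fApp_coe β]; rfl
  rw [e1, e2]

end SGrp
end Paper
namespace Paper

theorem dProd_single' {γ : Type*} [Monoid γ] (f : ℕ → γ) {a b : ℕ} (h : b = a + 1) :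
    dProd f a b = f a := by
  subst h; exact dProd_single f a

namespace SGrp
variable (G : SGrp)

/-! ### closed forms of `xE (diagMap θ x)` for generators -/

section FaceForms
variable {m : ℕ} (l : ℕ) (x : Fin (m+1) → G.obj (m+1))

theorem xE_diagF_lt {i0 : ℕ} (h1 : i0 < m) (h2 : i0 + 1 < l) :
    G.xE (G.diagMap (δOH l m (m+1)) x) i0 = G.map (δOH l m (m+1)) (G.xE x i0) := by
  rw [G.xE_lt _ h1, G.diagMap_def]
  have ecs : (((δOH l m (m+1)) (Fin.castSucc ⟨i0, h1⟩) : Fin (m+2)) : ℕ) = i0 := by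
    have hv : ((Fin.castSucc (⟨i0, h1⟩ : Fin m)) : ℕ) = i0 := rfl
    rw [δOH_coe, hv]
    split_ifs <;> omega
  have esc : (((δOH l m (m+1)) (Fin.succ ⟨i0, h1⟩) : Fin (m+2)) : ℕ) = i0 + 1 := by
    have hv : ((Fin.succ (⟨i0, h1⟩ : Fin m)) : ℕ) = i0 + 1 := rfl
    rw [δOH_coe, hv]
    split_ifs <;> omega
  rw [ecs, esc, dProd_single]

theorem xE_diagF_eq {i0 : ℕ} (h1 : i0 < m) (h2 : i0 + 1 = l) :
    G.xE (G.diagMap (δOH l m (m+1)) x) i0 =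
      G.map (δOH l m (m+1)) (G.xE x (i0+1)) * G.map (δOH l m (m+1)) (G.xE x i0) := by
  rw [G.xE_lt _ h1, G.diagMap_def]
  have ecs : (((δOH l m (m+1)) (Fin.castSucc ⟨i0, h1⟩) : Fin (m+2)) : ℕ) = i0 := by
    have hv : ((Fin.castSucc (⟨i0, h1⟩ : Fin m)) : ℕ) = i0 := rfl
    rw [δOH_coe, hv]
    split_ifs <;> omega
  have esc : (((δOH l m (m+1)) (Fin.succ ⟨i0, h1⟩) : Fin (m+2)) : ℕ) = i0 + 2 := by
    have hv : ((Fin.succ (⟨i0, h1⟩ : Fin m)) : ℕ) = i0 + 1 := rfl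
    rw [δOH_coe, hv]
    split_ifs <;> omega
  rw [ecs, esc, dProd_pair]

theorem xE_diagF_gt {i0 : ℕ} (h1 : i0 < m) (h2 : l ≤ i0) :
    G.xE (G.diagMap (δOH l m (m+1)) x) i0 = G.map (δOH l m (m+1)) (G.xE x (i0+1)) := by
  rw [G.xE_lt _ h1, G.diagMap_def]
  have ecs : (((δOH l m (m+1)) (Fin.castSucc ⟨i0, h1⟩) : Fin (m+2)) : ℕ) = i0 + 1 := by
    have hv : ((Fin.castSucc (⟨i0, h1⟩ : Fin m)) : ℕ) = i0 := rfl
    rw [δOH_coe, hv]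
    split_ifs <;> omega
  have esc : (((δOH l m (m+1)) (Fin.succ ⟨i0, h1⟩) : Fin (m+2)) : ℕ) = i0 + 2 := by
    have hv : ((Fin.succ (⟨i0, h1⟩ : Fin m)) : ℕ) = i0 + 1 := rfl
    rw [δOH_coe, hv]
    split_ifs <;> omega
  rw [ecs, esc, dProd_single]

end FaceForms

section SigmaForms
variable {n : ℕ} (r : ℕ) (x : Fin n → G.obj n)

theorem xE_diagS_lt {i0 : ℕ} (h1 : i0 < n+1) (h2 : i0 < r) (hr : r ≤ n) :
    G.xE (G.diagMap (σOH r (n+1) n) x) i0 = G.map (σOH r (n+1) n) (G.xE x i0) := by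
  rw [G.xE_lt _ h1, G.diagMap_def]
  have ecs : (((σOH r (n+1) n) (Fin.castSucc ⟨i0, h1⟩) : Fin (n+1)) : ℕ) = i0 := by
    have hv : ((Fin.castSucc (⟨i0, h1⟩ : Fin (n+1))) : ℕ) = i0 := rfl
    rw [σOH_coe, hv]
    split_ifs <;> omega
  have esc : (((σOH r (n+1) n) (Fin.succ ⟨i0, h1⟩) : Fin (n+1)) : ℕ) = i0 + 1 := by
    have hv : ((Fin.succ (⟨i0, h1⟩ : Fin (n+1))) : ℕ) = i0 + 1 := rfl
    rw [σOH_coe, hv]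
    split_ifs <;> omega
  rw [ecs, esc, dProd_single]

theorem xE_diagS_eq {i0 : ℕ} (h1 : i0 < n+1) (h2 : i0 = r) (hr : r ≤ n) :
    G.xE (G.diagMap (σOH r (n+1) n) x) i0 = 1 := by
  rw [G.xE_lt _ h1, G.diagMap_def]
  have ecs : (((σOH r (n+1) n) (Fin.castSucc ⟨i0, h1⟩) : Fin (n+1)) : ℕ) = i0 := by
    have hv : ((Fin.castSucc (⟨i0, h1⟩ : Fin (n+1))) : ℕ) = i0 := rfl
    rw [σOH_coe, hv]
    split_ifs <;> omega
  have esc : (((σOH r (n+1) n) (Fin.succ ⟨i0, h1⟩) : Fin (n+1)) : ℕ) = i0 := by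
    have hv : ((Fin.succ (⟨i0, h1⟩ : Fin (n+1))) : ℕ) = i0 + 1 := rfl
    rw [σOH_coe, hv]
    split_ifs <;> omega
  rw [ecs, esc, dProd_stop _ le_rfl]

theorem xE_diagS_gt {i0 : ℕ} (h1 : i0 < n+1) (h2 : r < i0) (hr : r ≤ n) :
    G.xE (G.diagMap (σOH r (n+1) n) x) i0 = G.map (σOH r (n+1) n) (G.xE x (i0-1)) := by
  rw [G.xE_lt _ h1, G.diagMap_def]
  have ecs : (((σOH r (n+1) n) (Fin.castSucc ⟨i0, h1⟩) : Fin (n+1)) : ℕ) = i0 - 1 := by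
    have hv : ((Fin.castSucc (⟨i0, h1⟩ : Fin (n+1))) : ℕ) = i0 := rfl
    rw [σOH_coe, hv]
    split_ifs <;> omega
  have esc : (((σOH r (n+1) n) (Fin.succ ⟨i0, h1⟩) : Fin (n+1)) : ℕ) = i0 := by
    have hv : ((Fin.succ (⟨i0, h1⟩ : Fin (n+1))) : ℕ) = i0 + 1 := rfl
    rw [σOH_coe, hv]
    split_ifs <;> omega
  rw [ecs, esc, dProd_single' _ (by omega)]

end SigmaForms

/-! ### swap identities -/

section Swaps

theorem swapF1 {m : ℕ} {l i c : ℕ} (h : i + c < l) (z : G.obj (m+1)) :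
    G.map (δOH l m (m+1)) (G.map (dsOH i c (m+1)) z) =
      G.map (dsOH i c m) (G.map (δOH l m (m+1)) z) := by
  refine G.map_swap _ _ _ _ (fun p => ?_) z
  have := p.isLt
  simp only [δOH_coe, dsOH_coe]
  split_ifs <;> omega

theorem swapF2 {m : ℕ} {l i c : ℕ} (h : l ≤ i) (z : G.obj (m+1)) :
    G.map (δOH l m (m+1)) (G.map (dsOH (i+1) c (m+1)) z) =
      G.map (dsOH i c m) (G.map (δOH l m (m+1)) z) := by
  refine G.map_swap _ _ _ _ (fun p => ?_) z
  have := p.isLt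
  simp only [δOH_coe, dsOH_coe]
  split_ifs <;> omega

theorem swapF3 {m : ℕ} {l i c : ℕ} (h1 : i < l) (h2 : l ≤ i + c) (z : G.obj (m+1)) :
    G.map (δOH l m (m+1)) (G.map (dsOH i c (m+1)) z) =
      G.map (dsOH i (c-1) m) (G.map (δOH l m (m+1)) z) := by
  refine G.map_swap _ _ _ _ (fun p => ?_) z
  have := p.isLt
  simp only [δOH_coe, dsOH_coe]
  split_ifs <;> omega

theorem absorbF {m : ℕ} {l : ℕ} (h : 1 ≤ l) (z : G.obj (m+1)) :
    G.map (δOH l m (m+1)) (G.map (dsOH (l-1) 1 (m+1)) z) = G.map (δOH l m (m+1)) z := by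
  refine G.map_map _ _ _ (fun p => ?_) z
  have := p.isLt
  simp only [δOH_coe, dsOH_coe]
  split_ifs <;> omega

theorem combF {m : ℕ} {l i : ℕ} (h : i + 1 < l) (z : G.obj (m+1)) :
    G.map (δOH l m (m+1)) (G.map (dsOH i (l-1-i) (m+1)) (G.map (dsOH (l-1) 1 (m+1)) z)) =
      G.map (dsOH i (l-1-i) m) (G.map (δOH l m (m+1)) z) := by
  rw [G.map_comp (dsOH i (l-1-i) (m+1)) (dsOH (l-1) 1 (m+1)) z]
  refine G.map_swap _ _ _ _ (fun p => ?_) z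
  have := p.isLt
  simp only [δOH_coe, dsOH_coe, OrderHom.comp_coe, Function.comp_apply]
  split_ifs <;> omega

theorem swapS1 {n : ℕ} {r i c : ℕ} (h : i + c < r) (hr : r ≤ n) (z : G.obj n) :
    G.map (dsOH i c (n+1)) (G.map (σOH r (n+1) n) z) =
      G.map (σOH r (n+1) n) (G.map (dsOH i c n) z) := by
  refine G.map_swap _ _ _ _ (fun p => ?_) z
  have := p.isLt
  simp only [σOH_coe, dsOH_coe]
  split_ifs <;> omega

theorem swapS2 {n : ℕ} {r i c : ℕ} (h1 : r < i) (h2 : 1 ≤ i) (hr : r ≤ n) (z : G.obj n) :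
    G.map (dsOH i c (n+1)) (G.map (σOH r (n+1) n) z) =
      G.map (σOH r (n+1) n) (G.map (dsOH (i-1) c n) z) := by
  refine G.map_swap _ _ _ _ (fun p => ?_) z
  have := p.isLt
  simp only [σOH_coe, dsOH_coe]
  split_ifs <;> omega

theorem swapS3 {n : ℕ} {r i c : ℕ} (h1 : i ≤ r) (h2 : r < i + c) (hr : r ≤ n) (z : G.obj n) :
    G.map (dsOH i c (n+1)) (G.map (σOH r (n+1) n) z) =
      G.map (σOH r (n+1) n) (G.map (dsOH i (c-1) n) z) := by
  refine G.map_swap _ _ _ _ (fun p => ?_) z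
  have := p.isLt
  simp only [σOH_coe, dsOH_coe]
  split_ifs <;> omega

end Swaps
end SGrp
end Paper
namespace Paper

theorem aProd_single {γ : Type*} [Monoid γ] (f : ℕ → γ) (a : ℕ) : aProd f a (a+1) = f a := by
  rw [aProd_succ f le_rfl, aProd_stop f le_rfl, one_mul]

theorem aProd_single' {γ : Type*} [Monoid γ] (f : ℕ → γ) {a b : ℕ} (h : b = a + 1) :
    aProd f a b = f a := by
  subst h; exact aProd_single f a

theorem aProd_pair' {γ : Type*} [Monoid γ] (f : ℕ → γ) {a b : ℕ} (h : b = a + 2) :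
    aProd f a b = f a * f (a+1) := by
  subst h
  rw [aProd_succ f (by omega), aProd_single]

theorem dProd_pair' {γ : Type*} [Monoid γ] (f : ℕ → γ) {a b : ℕ} (h : b = a + 2) :
    dProd f a b = f (a+1) * f a := by
  subst h; exact dProd_pair f a

theorem aProd_shift' {γ : Type*} [Monoid γ] (f : ℕ → γ) {a b a' b' : ℕ}
    (ha : a = a' + 1) (hb : b = b' + 1) :
    aProd f a b = aProd (fun j => f (j+1)) a' b' := by
  subst ha; subst hb; exact aProd_shift f a' b'

theorem dProd_shift' {γ : Type*} [Monoid γ] (f : ℕ → γ) {a b a' b' : ℕ}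
    (ha : a = a' + 1) (hb : b = b' + 1) :
    dProd f a b = dProd (fun j => f (j+1)) a' b' := by
  subst ha; subst hb; exact dProd_shift f a' b'

namespace SGrp

/-- the face-naturality statement at index `i`. -/
def FaceP (G : SGrp) (m l k : ℕ) (x : Fin (m+1) → G.obj (m+1)) (i : ℕ) : Prop :=
  (i+1 < l → G.map (δOH l m (m+1)) (G.Hh (m+1) k (G.xE x) i) =
      G.Hh m (if l < k then k-1 else k) (G.xE (G.diagMap (δOH l m (m+1)) x)) i) ∧
  (i+1 = l → G.map (δOH l m (m+1)) (G.Hh (m+1) k (G.xE x) (i+1)) *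
      G.map (δOH l m (m+1)) (G.Hh (m+1) k (G.xE x) i) =
      G.Hh m (if l < k then k-1 else k) (G.xE (G.diagMap (δOH l m (m+1)) x)) i) ∧
  (l ≤ i → G.map (δOH l m (m+1)) (G.Hh (m+1) k (G.xE x) (i+1)) =
      G.Hh m (if l < k then k-1 else k) (G.xE (G.diagMap (δOH l m (m+1)) x)) i)

variable (G : SGrp)

theorem facePart3 {m l k : ℕ} (hl : l ≤ m+1) (hk : k ≤ m+2) (x : Fin (m+1) → G.obj (m+1))
    (i : ℕ) (him : i < m) (hli : l ≤ i)
    (IH : ∀ j, i < j → j < m → G.FaceP m l k x j) :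
    G.map (δOH l m (m+1)) (G.Hh (m+1) k (G.xE x) (i+1)) =
      G.Hh m (if l < k then k-1 else k) (G.xE (G.diagMap (δOH l m (m+1)) x)) i := by
  by_cases hk2 : k ≤ i + 2
  · rw [G.Hh_low (by omega), G.Hh_low (by split_ifs <;> omega)]
    exact (G.xE_diagF_gt l x him hli).symm
  · -- long form on both sides; here l < k and k' = k - 1
    have hlk : l < k := by omega
    rw [if_pos hlk]
    rw [G.Hh_high (by omega), G.Hh_high (by omega), G.map_mul, G.map_aProd, G.map_dProd]
    have e21 : k - 1 - 1 = k - 2 := by omega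
    rw [e21]
    congr 1
    · -- aProd part
      rw [aProd_shift' _ (show i+1+1 = (i+1)+1 from rfl) (show k-1 = (k-2)+1 by omega)]
      apply aProd_congr
      intro j hj1 hj2
      rw [G.ds_eq (i+1) (j+1) (by omega) (by omega)]
      rw [G.ds_eq i j (by omega) (by omega)]
      have hc : (j+1) - (i+1) = j - i := by omega
      rw [hc]
      rw [G.swapF2 hli]
      rw [G.map_inv]
      have hIH := (IH j (by omega) (by omega)).2.2 (by omega)
      rw [if_pos hlk] at hIH
      rw [hIH]
    · -- dProd part
      rw [dProd_shift' _ rfl (show k-1 = (k-2)+1 by omega)]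
      apply dProd_congr
      intro j hj1 hj2
      rw [G.ds_eq (i+1) (k-1) (by omega) (by omega)]
      rw [G.ds_eq i (k-2) (by omega) (by omega)]
      have hc : (k-1) - (i+1) = (k-2) - i := by omega
      rw [hc]
      rw [G.swapF2 hli]
      rw [G.xE_diagF_gt l x (by omega) (by omega)]
end SGrp
end Paper
namespace Paper
namespace SGrp
variable (G : SGrp)

theorem facePart1 {m l k : ℕ} (hl : l ≤ m+1) (hk : k ≤ m+2) (x : Fin (m+1) → G.obj (m+1))
    (i : ℕ) (him : i < m) (h2 : i+1 < l)
    (IH : ∀ j, i < j → j < m → G.FaceP m l k x j) :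
    G.map (δOH l m (m+1)) (G.Hh (m+1) k (G.xE x) i) =
      G.Hh m (if l < k then k-1 else k) (G.xE (G.diagMap (δOH l m (m+1)) x)) i := by
  by_cases hlk : l < k
  · rw [if_pos hlk]
    have hki : i + 1 < k := by omega
    have hki' : i + 1 < k - 1 := by omega
    rw [G.Hh_high hki, G.Hh_high hki', G.map_mul, G.map_aProd, G.map_dProd]
    have e21 : k - 1 - 1 = k - 2 := by omega
    rw [e21]
    -- common factor identities
    have hF1 : ∀ j, i+1 ≤ j → j < l-1 →
        G.map (δOH l m (m+1)) (G.ds i j (G.Hh (m+1) k (G.xE x) j)⁻¹) =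
        G.ds i j (G.Hh m (k-1) (G.xE (G.diagMap (δOH l m (m+1)) x)) j)⁻¹ := by
      intro j hj1 hj2
      rw [G.ds_eq i j (by omega) (by omega), G.ds_eq i j (by omega) (by omega),
        G.swapF1 (by omega), G.map_inv]
      have hIH := (IH j (by omega) (by omega)).1 (by omega)
      rw [if_pos hlk] at hIH
      rw [hIH]
    by_cases hlk2 : l + 1 < k
    · -- generic subcase  l ≤ k - 2
      congr 1
      · -- aProd part
        rw [aProd_split _ (show i+1 ≤ l+1 by omega) (show l+1 ≤ k-1 by omega),
          aProd_split _ (show i+1 ≤ l-1 by omega) (show l-1 ≤ l+1 by omega),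
          aProd_pair' _ (show l+1 = (l-1)+2 by omega)]
        rw [aProd_split _ (show i+1 ≤ l by omega) (show l ≤ k-2 by omega),
          aProd_split _ (show i+1 ≤ l-1 by omega) (show l-1 ≤ l by omega),
          aProd_single' _ (show l = (l-1)+1 by omega)]
        congr 1
        · congr 1
          · exact aProd_congr hF1
          · -- pair merge
            have hIH2 := (IH (l-1) (by omega) (by omega)).2.1 (by omega)
            rw [if_pos hlk] at hIH2
            rw [G.ds_eq i (l-1) (by omega) (by omega),
              G.ds_eq i (l-1+1) (by omega) (by omega),
              G.ds_eq i (l-1) (by omega) (by omega)]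
            rw [G.swapF1 (show i + (l-1-i) < l by omega)]
            rw [G.swapF3 (show i < l by omega) (show l ≤ i + (l-1+1-i) by omega)]
            have ec : l-1+1-i-1 = l-1-i := by omega
            rw [ec]
            conv_lhs => rw [← G.map_mul, ← G.map_mul, ← mul_inv_rev, G.map_inv, G.map_mul,
              hIH2]
        · -- shifted tail
          rw [aProd_shift' _ rfl (show k-1 = (k-2)+1 by omega)]
          apply aProd_congr
          intro j hj1 hj2
          rw [G.ds_eq i (j+1) (by omega) (by omega), G.ds_eq i j (by omega) (by omega),
            G.swapF3 (show i < l by omega) (show l ≤ i + (j+1-i) by omega)]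
          have ec : j+1-i-1 = j - i := by omega
          rw [ec, G.map_inv]
          have hIH3 := (IH j (by omega) (by omega)).2.2 (by omega)
          rw [if_pos hlk] at hIH3
          rw [hIH3]
      · -- dProd part
        rw [dProd_split _ (show i ≤ l+1 by omega) (show l+1 ≤ k-1 by omega),
          dProd_split _ (show i ≤ l-1 by omega) (show l-1 ≤ l+1 by omega),
          dProd_pair' _ (show l+1 = (l-1)+2 by omega)]
        rw [dProd_split _ (show i ≤ l by omega) (show l ≤ k-2 by omega),
          dProd_split _ (show i ≤ l-1 by omega) (show l-1 ≤ l by omega),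
          dProd_single' _ (show l = (l-1)+1 by omega)]
        congr 1
        · -- shifted tail
          rw [dProd_shift' _ rfl (show k-1 = (k-2)+1 by omega)]
          apply dProd_congr
          intro j hj1 hj2
          rw [G.ds_eq i (k-1) (by omega) (by omega), G.ds_eq i (k-2) (by omega) (by omega),
            G.swapF3 (show i < l by omega) (show l ≤ i + (k-1-i) by omega)]
          have ec : k-1-i-1 = k-2-i := by omega
          rw [ec]
          rw [G.xE_diagF_gt l x (by omega) (by omega)]
        · congr 1
          · -- pair merge for x-part
            rw [G.ds_eq i (k-1) (by omega) (by omega),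
              G.ds_eq i (k-1) (by omega) (by omega),
              G.ds_eq i (k-2) (by omega) (by omega)]
            rw [G.swapF3 (show i < l by omega) (show l ≤ i + (k-1-i) by omega),
              G.swapF3 (show i < l by omega) (show l ≤ i + (k-1-i) by omega)]
            have ec : k-1-i-1 = k-2-i := by omega
            rw [ec]
            rw [G.xE_diagF_eq l x (by omega) (by omega), G.map_mul]
          · apply dProd_congr
            intro j hj1 hj2
            rw [G.ds_eq i (k-1) (by omega) (by omega), G.ds_eq i (k-2) (by omega) (by omega),
              G.swapF3 (show i < l by omega) (show l ≤ i + (k-1-i) by omega)]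
            have ec : k-1-i-1 = k-2-i := by omega
            rw [ec]
            rw [G.xE_diagF_lt l x (by omega) (by omega)]
    · -- subcase  l = k - 1
      have hekl2 : k - 2 = l - 1 := by omega
      rw [hekl2]
      rw [aProd_split _ (show i+1 ≤ l-1 by omega) (show l-1 ≤ k-1 by omega),
        aProd_single' _ (show k-1 = (l-1)+1 by omega)]
      rw [dProd_split _ (show i ≤ l-1 by omega) (show l-1 ≤ k-1 by omega),
        dProd_single' _ (show k-1 = (l-1)+1 by omega)]
      have hH : G.Hh (m+1) k (G.xE x) (l-1) = G.ds (l-1) (k-1) (G.xE x (l-1)) := by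
        rw [G.Hh_high (by omega), aProd_stop _ (show k-1 ≤ l-1+1 by omega), one_mul,
          dProd_single' _ (show k-1 = (l-1)+1 by omega)]
      have hmid : G.map (δOH l m (m+1)) (G.ds i (l-1) (G.Hh (m+1) k (G.xE x) (l-1))⁻¹) *
          G.map (δOH l m (m+1)) (G.ds i (k-1) (G.xE x (l-1))) = 1 := by
        rw [hH]
        rw [G.ds_eq (l-1) (k-1) (by omega) (by omega)]
        have ec1 : k - 1 - (l-1) = 1 := by omega
        rw [ec1]
        rw [← G.map_inv]
        rw [G.ds_eq i (l-1) (by omega) (by omega)]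
        rw [G.combF (by omega)]
        rw [G.ds_eq i (k-1) (by omega) (by omega)]
        rw [G.swapF3 (show i < l by omega) (show l ≤ i + (k-1-i) by omega)]
        have ec2 : k-1-i-1 = l-1-i := by omega
        rw [ec2]
        rw [G.map_inv, G.map_inv, inv_mul_cancel]
      calc aProd (fun j => G.map (δOH l m (m+1)) (G.ds i j (G.Hh (m+1) k (G.xE x) j)⁻¹))
            (i+1) (l-1) *
            G.map (δOH l m (m+1)) (G.ds i (l-1) (G.Hh (m+1) k (G.xE x) (l-1))⁻¹) *
            (G.map (δOH l m (m+1)) (G.ds i (k-1) (G.xE x (l-1))) *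
              dProd (fun j => G.map (δOH l m (m+1)) (G.ds i (k-1) (G.xE x j))) i (l-1)) =
          aProd (fun j => G.map (δOH l m (m+1)) (G.ds i j (G.Hh (m+1) k (G.xE x) j)⁻¹))
            (i+1) (l-1) *
            dProd (fun j => G.map (δOH l m (m+1)) (G.ds i (k-1) (G.xE x j))) i (l-1) := by
            rw [mul_assoc, ← mul_assoc (G.map (δOH l m (m+1))
              (G.ds i (l-1) (G.Hh (m+1) k (G.xE x) (l-1))⁻¹)), hmid, one_mul]
        _ = aProd (fun j => G.ds i j
              (G.Hh m (k-1) (G.xE (G.diagMap (δOH l m (m+1)) x)) j)⁻¹) (i+1) (l-1) *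
            dProd (fun j => G.ds i (l-1)
              (G.xE (G.diagMap (δOH l m (m+1)) x) j)) i (l-1) := by
            congr 1
            · exact aProd_congr hF1
            · apply dProd_congr
              intro j hj1 hj2
              rw [G.ds_eq i (k-1) (by omega) (by omega), G.ds_eq i (l-1) (by omega) (by omega),
                G.swapF3 (show i < l by omega) (show l ≤ i + (k-1-i) by omega)]
              have ec : k-1-i-1 = l-1-i := by omega
              rw [ec]
              rw [G.xE_diagF_lt l x (by omega) (by omega)]
  · -- case l ≥ k : k' = k, all factors commute plainly
    rw [if_neg hlk]
    by_cases hki : k ≤ i + 1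
    · rw [G.Hh_low hki, G.Hh_low hki]
      exact (G.xE_diagF_lt l x him h2).symm
    · rw [G.Hh_high (by omega), G.Hh_high (by omega), G.map_mul, G.map_aProd, G.map_dProd]
      congr 1
      · apply aProd_congr
        intro j hj1 hj2
        rw [G.ds_eq i j (by omega) (by omega), G.ds_eq i j (by omega) (by omega),
          G.swapF1 (by omega), G.map_inv]
        have hIH := (IH j (by omega) (by omega)).1 (by omega)
        rw [if_neg hlk] at hIH
        rw [hIH]
      · apply dProd_congr
        intro j hj1 hj2
        rw [G.ds_eq i (k-1) (by omega) (by omega), G.ds_eq i (k-1) (by omega) (by omega),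
          G.swapF1 (by omega)]
        rw [G.xE_diagF_lt l x (by omega) (by omega)]

end SGrp
end Paper
namespace Paper
namespace SGrp
variable (G : SGrp)

theorem facePart2 {m l k : ℕ} (hl : l ≤ m+1) (hk : k ≤ m+2) (x : Fin (m+1) → G.obj (m+1))
    (i : ℕ) (him : i < m) (h2 : i+1 = l)
    (IH : ∀ j, i < j → j < m → G.FaceP m l k x j) :
    G.map (δOH l m (m+1)) (G.Hh (m+1) k (G.xE x) (i+1)) *
      G.map (δOH l m (m+1)) (G.Hh (m+1) k (G.xE x) i) =
      G.Hh m (if l < k then k-1 else k) (G.xE (G.diagMap (δOH l m (m+1)) x)) i := by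
  by_cases hkA : k ≤ i + 1
  · -- low case
    rw [if_neg (by omega)]
    rw [G.Hh_low (show k ≤ i+1+1 by omega), G.Hh_low hkA, G.Hh_low hkA]
    exact (G.xE_diagF_eq l x him h2).symm
  · by_cases hkB : k = i + 2
    · -- boundary case  k = l + 1
      rw [if_pos (by omega)]
      rw [G.Hh_low (show k ≤ i+1+1 by omega)]
      rw [G.Hh_high (show i+1 < k by omega)]
      rw [G.Hh_low (show k-1 ≤ i+1 by omega)]
      rw [aProd_stop _ (show k-1 ≤ i+1 by omega), one_mul,
        dProd_single' _ (show k-1 = i+1 by omega)]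
      rw [G.ds_eq i (k-1) (by omega) (by omega)]
      have ec0 : k-1-i = 1 := by omega
      rw [ec0]
      rw [show (dsOH i 1 (m+1)) = dsOH (l-1) 1 (m+1) by rw [show i = l-1 by omega]]
      rw [G.absorbF (show 1 ≤ l by omega)]
      rw [G.xE_diagF_eq l x him h2]
    · -- main case  k > l + 1
      have hkC : i + 2 < k := by omega
      rw [if_pos (by omega)]
      rw [G.Hh_high (show i+1 < k by omega)]
      rw [G.Hh_high (show i+1 < k-1 by omega)]
      have e21 : k - 1 - 1 = k - 2 := by omega
      rw [e21]
      rw [aProd_split _ (show i+1 ≤ i+2 by omega) (show i+2 ≤ k-1 by omega),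
        aProd_single' _ (show i+2 = (i+1)+1 from rfl)]
      rw [G.map_mul, G.map_mul]
      rw [G.ds_eq i (i+1) (by omega) (by omega)]
      have ec0 : i+1-i = 1 := by omega
      rw [ec0]
      rw [show (dsOH i 1 (m+1)) = dsOH (l-1) 1 (m+1) by rw [show i = l-1 by omega]]
      rw [G.absorbF (show 1 ≤ l by omega)]
      rw [G.map_inv]
      rw [← mul_assoc, mul_inv_cancel_left]
      congr 1
      · -- aProd tail
        rw [G.map_aProd, aProd_shift' _ (show i+2 = (i+1)+1 from rfl)
          (show k-1 = (k-2)+1 by omega)]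
        apply aProd_congr
        intro j hj1 hj2
        rw [G.ds_eq i (j+1) (by omega) (by omega), G.ds_eq i j (by omega) (by omega),
          G.swapF3 (show i < l by omega) (show l ≤ i + (j+1-i) by omega)]
        have ec : j+1-i-1 = j-i := by omega
        rw [ec, G.map_inv]
        have hIH := (IH j (by omega) (by omega)).2.2 (by omega)
        rw [if_pos (by omega)] at hIH
        rw [hIH]
      · -- dProd part
        rw [G.map_dProd]
        rw [dProd_split _ (show i ≤ i+2 by omega) (show i+2 ≤ k-1 by omega),
          dProd_pair' _ (show i+2 = i+2 from rfl)]
        rw [dProd_split _ (show i ≤ i+1 by omega) (show i+1 ≤ k-2 by omega),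
          dProd_single' _ (show i+1 = i+1 from rfl)]
        congr 1
        · -- shifted tail
          rw [dProd_shift' _ (show i+2 = (i+1)+1 from rfl) (show k-1 = (k-2)+1 by omega)]
          apply dProd_congr
          intro j hj1 hj2
          rw [G.ds_eq i (k-1) (by omega) (by omega), G.ds_eq i (k-2) (by omega) (by omega),
            G.swapF3 (show i < l by omega) (show l ≤ i + (k-1-i) by omega)]
          have ec : k-1-i-1 = k-2-i := by omega
          rw [ec]
          rw [G.xE_diagF_gt l x (by omega) (by omega)]
        · -- merged pair
          rw [G.ds_eq i (k-1) (by omega) (by omega), G.ds_eq i (k-1) (by omega) (by omega),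
            G.ds_eq i (k-2) (by omega) (by omega)]
          rw [G.swapF3 (show i < l by omega) (show l ≤ i + (k-1-i) by omega),
            G.swapF3 (show i < l by omega) (show l ≤ i + (k-1-i) by omega)]
          have ec : k-1-i-1 = k-2-i := by omega
          rw [ec]
          rw [G.xE_diagF_eq l x (by omega) (by omega), G.map_mul]

theorem faceCore {m l k : ℕ} (hl : l ≤ m+1) (hk : k ≤ m+2) (x : Fin (m+1) → G.obj (m+1)) :
    ∀ d i, i < m → m - i ≤ d → G.FaceP m l k x i := by
  intro d
  induction d with
  | zero => intro i h1 h2; omega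
  | succ d ih =>
    intro i him hd
    have IH : ∀ j, i < j → j < m → G.FaceP m l k x j := fun j hj1 hj2 =>
      ih j hj2 (by omega)
    refine ⟨fun h => G.facePart1 hl hk x i him h IH,
      fun h => G.facePart2 hl hk x i him h IH,
      fun h => G.facePart3 hl hk x i him h IH⟩

end SGrp
end Paper
namespace Paper
namespace SGrp
variable (G : SGrp)

theorem ds_self {N : ℕ} (i : ℕ) (z : G.obj N) : G.ds i i z = z := by
  unfold ds
  have hc : min (i - i) N = 0 := by omega
  rw [hc]
  exact G.gcast_rfl z

/-- the degeneracy-naturality statement at index `i`. -/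
def SigmaP (G : SGrp) (n r k : ℕ) (x : Fin n → G.obj n) (i : ℕ) : Prop :=
  (i < r → G.map (σOH r (n+1) n) (G.Hh n k (G.xE x) i) =
      G.Hh (n+1) (if r < k then k+1 else k) (G.xE (G.diagMap (σOH r (n+1) n) x)) i) ∧
  (i = r → G.Hh (n+1) (if r < k then k+1 else k) (G.xE (G.diagMap (σOH r (n+1) n) x)) i = 1) ∧
  (r < i → G.map (σOH r (n+1) n) (G.Hh n k (G.xE x) (i-1)) =
      G.Hh (n+1) (if r < k then k+1 else k) (G.xE (G.diagMap (σOH r (n+1) n) x)) i)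

theorem sigmaPart3 {n r k : ℕ} (hr : r ≤ n) (hk : k ≤ n+1) (x : Fin n → G.obj n)
    (i : ℕ) (hin : i < n+1) (hri : r < i)
    (IH : ∀ j, i < j → j < n+1 → G.SigmaP n r k x j) :
    G.map (σOH r (n+1) n) (G.Hh n k (G.xE x) (i-1)) =
      G.Hh (n+1) (if r < k then k+1 else k) (G.xE (G.diagMap (σOH r (n+1) n) x)) i := by
  by_cases hki : k ≤ i
  · rw [G.Hh_low (by omega), G.Hh_low (by split_ifs <;> omega)]
    exact (G.xE_diagS_gt r x hin hri hr).symm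
  · have hrk : r < k := by omega
    rw [if_pos hrk]
    rw [G.Hh_high (show (i-1)+1 < k by omega), G.Hh_high (show i+1 < k+1 by omega)]
    have eii : i - 1 + 1 = i := by omega
    have e21 : k + 1 - 1 = k := by omega
    rw [eii, e21, G.map_mul, G.map_aProd, G.map_dProd]
    congr 1
    · rw [aProd_shift' _ rfl (show k = (k-1)+1 by omega)]
      apply aProd_congr
      intro j hj1 hj2
      have hIH := (IH (j+1) (by omega) (by omega)).2.2 (by omega)
      rw [if_pos hrk] at hIH
      have ejj : j + 1 - 1 = j := by omega
      rw [ejj] at hIH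
      rw [G.ds_eq (i-1) j (by omega) (by omega), G.ds_eq i (j+1) (by omega) (by omega)]
      rw [← hIH, ← G.map_inv, G.swapS2 hri (by omega) hr]
      have ec : j + 1 - i = j - (i-1) := by omega
      rw [ec]
    · rw [dProd_shift' _ (show i = (i-1)+1 by omega) (show k = (k-1)+1 by omega)]
      apply dProd_congr
      intro j hj1 hj2
      rw [G.ds_eq (i-1) (k-1) (by omega) (by omega), G.ds_eq i k (by omega) (by omega)]
      rw [G.xE_diagS_gt r x (by omega) (by omega) hr]
      have ejj : j + 1 - 1 = j := by omega
      rw [ejj]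
      rw [G.swapS2 hri (by omega) hr]
      have ec : k - i = k - 1 - (i-1) := by omega
      rw [ec]

theorem sigmaPart2 {n r k : ℕ} (hr : r ≤ n) (hk : k ≤ n+1) (x : Fin n → G.obj n)
    (hin : r < n+1)
    (IH : ∀ j, r < j → j < n+1 → G.SigmaP n r k x j) :
    G.Hh (n+1) (if r < k then k+1 else k) (G.xE (G.diagMap (σOH r (n+1) n) x)) r = 1 := by
  by_cases hkA : k ≤ r
  · rw [if_neg (by omega), G.Hh_low (by omega)]
    exact G.xE_diagS_eq r x hin rfl hr
  · have hrk : r < k := by omega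
    rw [if_pos hrk]
    by_cases hkB : k = r + 1
    · rw [G.Hh_high (by omega)]
      have e21 : k + 1 - 1 = r + 1 := by omega
      rw [e21]
      rw [aProd_stop _ (by omega), one_mul, dProd_single' _ (show r+1 = r+1 from rfl)]
      rw [G.xE_diagS_eq r x hin rfl hr]
      rw [G.ds_eq r (r+1) (by omega) (by omega), G.map_one]
    · -- main case k > r + 1
      have hkC : r + 1 < k := by omega
      rw [G.Hh_high (show r + 1 < k+1 by omega)]
      have e21 : k + 1 - 1 = k := by omega
      rw [e21]
      have hA : aProd (fun j => G.ds r j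
            (G.Hh (n+1) (k+1) (G.xE (G.diagMap (σOH r (n+1) n) x)) j)⁻¹) (r+1) k =
          G.map (σOH r (n+1) n) ((G.Hh n k (G.xE x) r)⁻¹ *
            aProd (fun j => G.ds r j (G.Hh n k (G.xE x) j)⁻¹) (r+1) (k-1)) :=
        calc aProd (fun j => G.ds r j
              (G.Hh (n+1) (k+1) (G.xE (G.diagMap (σOH r (n+1) n) x)) j)⁻¹) (r+1) k
            = aProd (fun j => G.ds r (j+1)
              (G.Hh (n+1) (k+1) (G.xE (G.diagMap (σOH r (n+1) n) x)) (j+1))⁻¹) r (k-1) :=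
              aProd_shift' _ rfl (by omega)
          _ = aProd (fun j => G.map (σOH r (n+1) n)
                (G.ds r j (G.Hh n k (G.xE x) j)⁻¹)) r (k-1) := by
              apply aProd_congr
              intro j hj1 hj2
              have hIH := (IH (j+1) (by omega) (by omega)).2.2 (by omega)
              rw [if_pos hrk] at hIH
              have ejj : j + 1 - 1 = j := by omega
              rw [ejj] at hIH
              rw [← hIH, G.ds_eq r (j+1) (by omega) (by omega), ← G.map_inv,
                G.swapS3 (le_refl r) (show r < r + (j+1-r) by omega) hr]
              have ec : j + 1 - r - 1 = j - r := by omega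
              rw [ec, ← G.ds_eq r j (by omega) (by omega)]
          _ = G.map (σOH r (n+1) n)
                (aProd (fun j => G.ds r j (G.Hh n k (G.xE x) j)⁻¹) r (k-1)) :=
              (G.map_aProd _ _ _ _).symm
          _ = G.map (σOH r (n+1) n) ((G.Hh n k (G.xE x) r)⁻¹ *
                aProd (fun j => G.ds r j (G.Hh n k (G.xE x) j)⁻¹) (r+1) (k-1)) := by
              rw [aProd_split _ (show r ≤ r+1 by omega) (show r+1 ≤ k-1 by omega),
                aProd_single' _ (show r+1 = r+1 from rfl), G.ds_self]
      have hB : dProd (fun j => G.ds r k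
            (G.xE (G.diagMap (σOH r (n+1) n) x) j)) r k =
          G.map (σOH r (n+1) n) (dProd (fun j => G.ds r (k-1) (G.xE x j)) r (k-1)) := by
        rw [dProd_split _ (show r ≤ r+1 by omega) (show r+1 ≤ k by omega),
          dProd_single' _ (show r+1 = r+1 from rfl)]
        rw [G.xE_diagS_eq r x hin rfl hr, G.ds_eq r k (by omega) (by omega), G.map_one,
          mul_one]
        calc dProd (fun j => G.ds r k
              (G.xE (G.diagMap (σOH r (n+1) n) x) j)) (r+1) k
            = dProd (fun j => G.ds r k
              (G.xE (G.diagMap (σOH r (n+1) n) x) (j+1))) r (k-1) :=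
              dProd_shift' _ rfl (by omega)
          _ = dProd (fun j => G.map (σOH r (n+1) n)
                (G.ds r (k-1) (G.xE x j))) r (k-1) := by
              apply dProd_congr
              intro j hj1 hj2
              rw [G.xE_diagS_gt r x (by omega) (by omega) hr]
              have ejj : j + 1 - 1 = j := by omega
              rw [ejj]
              rw [G.ds_eq r k (by omega) (by omega),
                G.swapS3 (le_refl r) (show r < r + (k-r) by omega) hr]
              have ec : k - r - 1 = k - 1 - r := by omega
              rw [ec, ← G.ds_eq r (k-1) (by omega) (by omega)]
          _ = G.map (σOH r (n+1) n)
                (dProd (fun j => G.ds r (k-1) (G.xE x j)) r (k-1)) :=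
              (G.map_dProd _ _ _ _).symm
      rw [hA, hB, ← G.map_mul, mul_assoc, ← G.Hh_high (show r+1 < k by omega),
        inv_mul_cancel, G.map_one]

theorem sigmaPart1 {n r k : ℕ} (hr : r ≤ n) (hk : k ≤ n+1) (x : Fin n → G.obj n)
    (i : ℕ) (hin : i < n+1) (hir : i < r)
    (IH : ∀ j, i < j → j < n+1 → G.SigmaP n r k x j) :
    G.map (σOH r (n+1) n) (G.Hh n k (G.xE x) i) =
      G.Hh (n+1) (if r < k then k+1 else k) (G.xE (G.diagMap (σOH r (n+1) n) x)) i := by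
  by_cases hki : k ≤ i + 1
  · rw [if_neg (by omega), G.Hh_low hki, G.Hh_low hki]
    exact (G.xE_diagS_lt r x hin hir hr).symm
  · by_cases hrk : r < k
    · -- interleaved case
      rw [if_pos hrk]
      rw [G.Hh_high (by omega), G.Hh_high (show i+1 < k+1 by omega)]
      have e21 : k + 1 - 1 = k := by omega
      rw [e21, G.map_mul]
      have hA : aProd (fun j => G.ds i j
            (G.Hh (n+1) (k+1) (G.xE (G.diagMap (σOH r (n+1) n) x)) j)⁻¹) (i+1) k =
          G.map (σOH r (n+1) n)
            (aProd (fun j => G.ds i j (G.Hh n k (G.xE x) j)⁻¹) (i+1) (k-1)) := by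
        rw [aProd_split _ (show i+1 ≤ r by omega) (show r ≤ k by omega),
          aProd_split _ (show r ≤ r+1 by omega) (show r+1 ≤ k by omega),
          aProd_single' _ (show r+1 = r+1 from rfl)]
        have hmidF : G.ds i r
            (G.Hh (n+1) (k+1) (G.xE (G.diagMap (σOH r (n+1) n) x)) r)⁻¹ = 1 := by
          have hIH := (IH r (by omega) (by omega)).2.1 rfl
          rw [if_pos hrk] at hIH
          rw [hIH, inv_one, G.ds_eq i r (by omega) (by omega), G.map_one]
        rw [hmidF, one_mul]
        have h1 : aProd (fun j => G.ds i j
              (G.Hh (n+1) (k+1) (G.xE (G.diagMap (σOH r (n+1) n) x)) j)⁻¹) (i+1) r =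
            G.map (σOH r (n+1) n)
              (aProd (fun j => G.ds i j (G.Hh n k (G.xE x) j)⁻¹) (i+1) r) := by
          rw [G.map_aProd]
          apply aProd_congr
          intro j hj1 hj2
          have hIH := (IH j (by omega) (by omega)).1 (by omega)
          rw [if_pos hrk] at hIH
          rw [← hIH, G.ds_eq i j (by omega) (by omega), ← G.map_inv,
            G.swapS1 (show i + (j-i) < r by omega) hr,
            ← G.ds_eq i j (by omega) (by omega)]
        have h2 : aProd (fun j => G.ds i j
              (G.Hh (n+1) (k+1) (G.xE (G.diagMap (σOH r (n+1) n) x)) j)⁻¹) (r+1) k =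
            G.map (σOH r (n+1) n)
              (aProd (fun j => G.ds i j (G.Hh n k (G.xE x) j)⁻¹) r (k-1)) := by
          rw [aProd_shift' _ rfl (show k = (k-1)+1 by omega), G.map_aProd]
          apply aProd_congr
          intro j hj1 hj2
          have hIH := (IH (j+1) (by omega) (by omega)).2.2 (by omega)
          rw [if_pos hrk] at hIH
          have ejj : j + 1 - 1 = j := by omega
          rw [ejj] at hIH
          rw [← hIH, G.ds_eq i (j+1) (by omega) (by omega), ← G.map_inv,
            G.swapS3 (show i ≤ r by omega) (show r < i + (j+1-i) by omega) hr]
          have ec : j + 1 - i - 1 = j - i := by omega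
          rw [ec, ← G.ds_eq i j (by omega) (by omega)]
        rw [h1, h2, ← G.map_mul,
          ← aProd_split _ (show i+1 ≤ r by omega) (show r ≤ k-1 by omega)]
      have hB : dProd (fun j => G.ds i k
            (G.xE (G.diagMap (σOH r (n+1) n) x) j)) i k =
          G.map (σOH r (n+1) n)
            (dProd (fun j => G.ds i (k-1) (G.xE x j)) i (k-1)) := by
        rw [dProd_split _ (show i ≤ r+1 by omega) (show r+1 ≤ k by omega),
          dProd_split _ (show i ≤ r by omega) (show r ≤ r+1 by omega),
          dProd_single' _ (show r+1 = r+1 from rfl)]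
        have hmidD : G.ds i k (G.xE (G.diagMap (σOH r (n+1) n) x) r) = 1 := by
          rw [G.xE_diagS_eq r x (by omega) rfl hr, G.ds_eq i k (by omega) (by omega),
            G.map_one]
        rw [hmidD, one_mul]
        have h3 : dProd (fun j => G.ds i k
              (G.xE (G.diagMap (σOH r (n+1) n) x) j)) (r+1) k =
            G.map (σOH r (n+1) n)
              (dProd (fun j => G.ds i (k-1) (G.xE x j)) r (k-1)) := by
          rw [dProd_shift' _ rfl (show k = (k-1)+1 by omega), G.map_dProd]
          apply dProd_congr
          intro j hj1 hj2
          rw [G.xE_diagS_gt r x (by omega) (by omega) hr]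
          have ejj : j + 1 - 1 = j := by omega
          rw [ejj]
          rw [G.ds_eq i k (by omega) (by omega),
            G.swapS3 (show i ≤ r by omega) (show r < i + (k-i) by omega) hr]
          have ec : k - i - 1 = k - 1 - i := by omega
          rw [ec, ← G.ds_eq i (k-1) (by omega) (by omega)]
        have h4 : dProd (fun j => G.ds i k
              (G.xE (G.diagMap (σOH r (n+1) n) x) j)) i r =
            G.map (σOH r (n+1) n)
              (dProd (fun j => G.ds i (k-1) (G.xE x j)) i r) := by
          rw [G.map_dProd]
          apply dProd_congr
          intro j hj1 hj2
          rw [G.xE_diagS_lt r x (by omega) (by omega) hr]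
          rw [G.ds_eq i k (by omega) (by omega),
            G.swapS3 (show i ≤ r by omega) (show r < i + (k-i) by omega) hr]
          have ec : k - i - 1 = k - 1 - i := by omega
          rw [ec, ← G.ds_eq i (k-1) (by omega) (by omega)]
        rw [h3, h4, ← G.map_mul,
          ← dProd_split _ (show i ≤ r by omega) (show r ≤ k-1 by omega)]
      rw [hA, hB]
    · -- r ≥ k : plain commutation
      rw [if_neg hrk]
      rw [G.Hh_high (by omega), G.Hh_high (by omega), G.map_mul, G.map_aProd, G.map_dProd]
      congr 1
      · apply aProd_congr
        intro j hj1 hj2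
        have hIH := (IH j (by omega) (by omega)).1 (by omega)
        rw [if_neg hrk] at hIH
        rw [G.ds_eq i j (by omega) (by omega), G.ds_eq i j (by omega) (by omega),
          ← hIH, ← G.map_inv, G.swapS1 (by omega) hr]
      · apply dProd_congr
        intro j hj1 hj2
        rw [G.ds_eq i (k-1) (by omega) (by omega), G.ds_eq i (k-1) (by omega) (by omega),
          G.xE_diagS_lt r x (by omega) (by omega) hr, G.swapS1 (by omega) hr]

end SGrp
end Paper
namespace Paper
namespace SGrp
variable (G : SGrp)

theorem sigmaCore {n r k : ℕ} (hr : r ≤ n) (hk : k ≤ n+1) (x : Fin n → G.obj n) :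
    ∀ d i, i < n+1 → n+1-i ≤ d → G.SigmaP n r k x i := by
  intro d
  induction d with
  | zero => intro i h1 h2; omega
  | succ d ih =>
    intro i hin hd
    have IH : ∀ j, i < j → j < n+1 → G.SigmaP n r k x j := fun j hj1 hj2 =>
      ih j hj2 (by omega)
    exact ⟨fun h => G.sigmaPart1 hr hk x i hin h IH,
      fun h => by subst h; exact G.sigmaPart2 hr hk x hin (fun j h1 h2 => IH j h1 h2),
      fun h => G.sigmaPart3 hr hk x i hin h IH⟩

end SGrp

theorem kOf_comp_delta {m : ℕ} (t : Fin (m+2) →o Fin 2) (l : ℕ) (hl : l ≤ m+1) :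
    kOf (t.comp (δOH l m (m+1))) = if l < kOf t then kOf t - 1 else kOf t := by
  rw [kOf_comp]
  have hkle : kOf t ≤ m + 2 := kOf_le t
  have hiff : ∀ p : Fin (m+1),
      (((δOH l m (m+1)) p : ℕ) < kOf t) = ((p:ℕ) < if l < kOf t then kOf t - 1 else kOf t) := by
    intro p
    have := p.isLt
    rw [δOH_coe]
    apply propext
    split_ifs <;> omega
  rw [Finset.filter_congr (fun p _ => by rw [hiff p])]
  rw [card_filter_lt]
  split_ifs <;> omega

theorem kOf_comp_sigma {n : ℕ} (t : Fin (n+1) →o Fin 2) (r : ℕ) (hr : r ≤ n) :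
    kOf (t.comp (σOH r (n+1) n)) = if r < kOf t then kOf t + 1 else kOf t := by
  rw [kOf_comp]
  have hkle : kOf t ≤ n + 1 := kOf_le t
  have hiff : ∀ p : Fin (n+2),
      (((σOH r (n+1) n) p : ℕ) < kOf t) = ((p:ℕ) < if r < kOf t then kOf t + 1 else kOf t) := by
    intro p
    have := p.isLt
    rw [σOH_coe]
    apply propext
    split_ifs <;> omega
  rw [Finset.filter_congr (fun p _ => by rw [hiff p])]
  rw [card_filter_lt]
  split_ifs <;> omega

namespace SGrp
variable (G : SGrp)

/-- the naturality statement for a single structure map. -/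
def NatP (G : SGrp) {m n : ℕ} (θ : Fin (m+1) →o Fin (n+1)) : Prop :=
  ∀ (x : Fin n → G.obj n) (t : Fin (n+1) →o Fin 2),
    G.diagMap θ (G.Hn n x t) = G.Hn m (G.diagMap θ x) (t.comp θ)

theorem natP_delta {m : ℕ} (l : ℕ) (hl : l ≤ m+1) : G.NatP (δOH l m (m+1)) := by
  intro x t
  funext i
  have him : (i:ℕ) < m := i.isLt
  have hface := G.faceCore (l := l) (k := kOf t) hl (by have := kOf_le t; omega) x
    (m - (i:ℕ)) (i:ℕ) him le_rfl
  have hL : G.diagMap (δOH l m (m+1)) (G.Hn (m+1) x t) i =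
      G.xE (G.diagMap (δOH l m (m+1)) (G.Hn (m+1) x t)) (i:ℕ) := by
    rw [G.xE_lt _ him, Fin.eta]
  have hR : G.Hn m (G.diagMap (δOH l m (m+1)) x) (t.comp (δOH l m (m+1))) i =
      G.Hh m (if l < kOf t then kOf t - 1 else kOf t)
        (G.xE (G.diagMap (δOH l m (m+1)) x)) (i:ℕ) := by
    rw [G.Hn_eq, kOf_comp_delta t l hl]
  rw [hL, hR]
  have hxE : ∀ j : ℕ, j < m + 1 → G.xE (G.Hn (m+1) x t) j = G.Hh (m+1) (kOf t) (G.xE x) j := by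
    intro j hj
    rw [G.xE_lt _ hj, G.Hn_eq]
  rcases lt_trichotomy ((i:ℕ)+1) l with hc | hc | hc
  · rw [G.xE_diagF_lt l (G.Hn (m+1) x t) him hc, hxE _ (by omega)]
    exact hface.1 hc
  · rw [G.xE_diagF_eq l (G.Hn (m+1) x t) him hc, hxE _ (by omega), hxE _ (by omega)]
    exact hface.2.1 hc
  · rw [G.xE_diagF_gt l (G.Hn (m+1) x t) him (by omega), hxE _ (by omega)]
    exact hface.2.2 (by omega)

theorem natP_sigma {n : ℕ} (r : ℕ) (hr : r ≤ n) : G.NatP (σOH r (n+1) n) := by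
  intro x t
  funext i
  have hin : (i:ℕ) < n + 1 := i.isLt
  have hsig := G.sigmaCore (r := r) (k := kOf t) hr (kOf_le t) x
    (n + 1 - (i:ℕ)) (i:ℕ) hin le_rfl
  have hL : G.diagMap (σOH r (n+1) n) (G.Hn n x t) i =
      G.xE (G.diagMap (σOH r (n+1) n) (G.Hn n x t)) (i:ℕ) := by
    rw [G.xE_lt _ hin, Fin.eta]
  have hR : G.Hn (n+1) (G.diagMap (σOH r (n+1) n) x) (t.comp (σOH r (n+1) n)) i =
      G.Hh (n+1) (if r < kOf t then kOf t + 1 else kOf t)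
        (G.xE (G.diagMap (σOH r (n+1) n) x)) (i:ℕ) := by
    rw [G.Hn_eq, kOf_comp_sigma t r hr]
  rw [hL, hR]
  have hxE : ∀ j : ℕ, j < n → G.xE (G.Hn n x t) j = G.Hh n (kOf t) (G.xE x) j := by
    intro j hj
    rw [G.xE_lt _ hj, G.Hn_eq]
  rcases lt_trichotomy ((i:ℕ)) r with hc | hc | hc
  · rw [G.xE_diagS_lt r (G.Hn n x t) hin hc hr, hxE _ (by omega)]
    exact hsig.1 hc
  · rw [G.xE_diagS_eq r (G.Hn n x t) hin hc hr]
    exact (hsig.2.1 hc).symm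
  · rw [G.xE_diagS_gt r (G.Hn n x t) hin hc hr, hxE _ (by omega)]
    exact hsig.2.2 hc

theorem natP_id {n : ℕ} (θ : Fin (n+1) →o Fin (n+1)) (hθ : ∀ p, ((θ p : ℕ)) = (p:ℕ)) :
    G.NatP θ := by
  intro x t
  have ht : t.comp θ = t := by
    apply OrderHom.ext
    funext p
    show t (θ p) = t p
    congr 1
    exact Fin.ext (hθ p)
  rw [G.diagMap_eq_self θ hθ, G.diagMap_eq_self θ hθ, ht]

theorem natP_comp {l m n : ℕ} {α : Fin (l+1) →o Fin (m+1)} {β : Fin (m+1) →o Fin (n+1)}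
    (hα : G.NatP α) (hβ : G.NatP β) : G.NatP (β.comp α) := by
  intro x t
  have hassoc : t.comp (β.comp α) = (t.comp β).comp α := rfl
  rw [← G.diagMap_comp, hβ x t, hα (G.diagMap β x) (t.comp β), ← G.diagMap_comp, hassoc]

end SGrp
end Paper
namespace Paper

/-- deletion of a value `v` from the codomain of `θ`. -/
def delOH {m n' : ℕ} (θ : Fin (m+1) →o Fin (n'+2)) (v : ℕ) : Fin (m+1) →o Fin (n'+1) where
  toFun p := ⟨min (if ((θ p : ℕ)) < v then ((θ p : ℕ)) else ((θ p : ℕ)) - 1) n', by omega⟩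
  monotone' := by
    intro p q hpq
    have h := θ.monotone hpq
    rw [Fin.le_def] at h
    simp only [Fin.mk_le_mk]
    split_ifs <;> omega

@[simp] theorem delOH_coe {m n' : ℕ} (θ : Fin (m+1) →o Fin (n'+2)) (v : ℕ) (p : Fin (m+1)) :
    ((delOH θ v p : ℕ)) = min (if ((θ p : ℕ)) < v then ((θ p : ℕ)) else ((θ p : ℕ)) - 1) n' :=
  rfl

namespace SGrp
variable (G : SGrp)

theorem natP_all : ∀ (N m n : ℕ), m + n ≤ N → ∀ (θ : Fin (m+1) →o Fin (n+1)), G.NatP θ := by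
  intro N
  induction N with
  | zero =>
    intro m n hmn θ
    have hm : m = 0 := by omega
    have hn : n = 0 := by omega
    subst hm; subst hn
    refine G.natP_id θ (fun p => ?_)
    have h1 := (θ p).isLt
    have h2 := p.isLt
    omega
  | succ N ihN =>
    intro m n hmn θ
    by_cases hinj : ∀ p : Fin m, ((θ p.castSucc : Fin (n+1)) : ℕ) < ((θ p.succ : Fin (n+1)) : ℕ)
    · -- θ strictly increasing
      have hval : ∀ p : Fin (m+1), (p : ℕ) ≤ ((θ p : Fin (n+1)) : ℕ) := by
        intro p
        induction p using Fin.induction with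
        | zero => simp
        | succ i ih =>
          have h := hinj i
          have e1 : ((Fin.castSucc i : Fin (m+1)) : ℕ) = (i : ℕ) := rfl
          have e2 : ((Fin.succ i : Fin (m+1)) : ℕ) = (i : ℕ) + 1 := rfl
          omega
      have hmn2 : m ≤ n := by
        have h1 := hval (Fin.last m)
        have h2 := (θ (Fin.last m)).isLt
        have h3 : ((Fin.last m : Fin (m+1)) : ℕ) = m := rfl
        omega
      rcases Nat.lt_or_ge m n with hlt | hge
      · -- m < n : factor through a coface
        cases n with
        | zero => omega
        | succ n' =>
          have hcard : (Finset.univ.image θ).card ≤ m + 1 :=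
            le_trans (Finset.card_image_le) (by rw [Finset.card_univ, Fintype.card_fin])
          have hne : (Finset.univ.image θ) ≠ Finset.univ := by
            intro h
            rw [h, Finset.card_univ, Fintype.card_fin] at hcard
            omega
          obtain ⟨v, hv⟩ : ∃ v : Fin (n'+2), v ∉ Finset.univ.image θ := by
            by_contra hall
            push_neg at hall
            exact hne (Finset.eq_univ_iff_forall.mpr hall)
          have hvv : ∀ p : Fin (m+1), ((θ p : Fin (n'+2)) : ℕ) ≠ (v : ℕ) := by
            intro p hpv
            exact hv (Finset.mem_image.mpr ⟨p, Finset.mem_univ _, Fin.ext hpv⟩)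
          have hfact : θ = (δOH (v : ℕ) n' (n'+1)).comp (delOH θ (v : ℕ)) := by
            refine OH_ext (fun q => ?_)
            have hcomp : (((δOH (v : ℕ) n' (n'+1)).comp (delOH θ (v : ℕ))) q : ℕ) =
                min (if (min (if ((θ q : ℕ)) < (v:ℕ) then ((θ q : ℕ)) else ((θ q : ℕ)) - 1) n')
                  < (v:ℕ) then
                  (min (if ((θ q : ℕ)) < (v:ℕ) then ((θ q : ℕ)) else ((θ q : ℕ)) - 1) n')
                  else (min (if ((θ q : ℕ)) < (v:ℕ) then ((θ q : ℕ)) else ((θ q : ℕ)) - 1) n')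
                    + 1) (n'+1) := rfl
            rw [hcomp]
            have h1 := (θ q).isLt
            have h2 := hvv q
            have h3 := v.isLt
            split_ifs <;> omega
          rw [hfact]
          exact G.natP_comp (ihN m n' (by omega) (delOH θ (v : ℕ)))
            (G.natP_delta (v : ℕ) (by omega))
      · -- m = n : θ is the identity
        have hmeq : m = n := by omega
        subst hmeq
        have hval2 : ∀ p : Fin (m+1), ((θ p : Fin (m+1)) : ℕ) ≤ (p : ℕ) := by
          intro p
          induction p using Fin.reverseInduction with
          | last =>
            have h1 := (θ (Fin.last m)).isLt
            have h3 : ((Fin.last m : Fin (m+1)) : ℕ) = m := rfl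
            omega
          | cast i ih =>
            have h := hinj i
            have e1 : ((Fin.castSucc i : Fin (m+1)) : ℕ) = (i : ℕ) := rfl
            have e2 : ((Fin.succ i : Fin (m+1)) : ℕ) = (i : ℕ) + 1 := rfl
            omega
        refine G.natP_id θ (fun p => ?_)
        have h1 := hval p
        have h2 := hval2 p
        omega
    · -- θ identifies two successive points : factor through a codegeneracy
      push_neg at hinj
      obtain ⟨p, hp⟩ := hinj
      have hple : ((θ p.castSucc : Fin (n+1)) : ℕ) ≤ ((θ p.succ : Fin (n+1)) : ℕ) := by
        have := θ.monotone (le_of_lt (Fin.castSucc_lt_succ (i := p)))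
        exact this
      have hpe : θ p.castSucc = θ p.succ := Fin.ext (by omega)
      cases m with
      | zero => exact p.elim0
      | succ m' =>
        have hr : (p : ℕ) ≤ m' := by have := p.isLt; omega
        have hfact : θ = (θ.comp (δOH ((p:ℕ)+1) m' (m'+1))).comp (σOH (p:ℕ) (m'+1) m') := by
          refine OH_ext (fun q => ?_)
          have hcomp : (((θ.comp (δOH ((p:ℕ)+1) m' (m'+1))).comp (σOH (p:ℕ) (m'+1) m')) q) =
              θ ((δOH ((p:ℕ)+1) m' (m'+1)) ((σOH (p:ℕ) (m'+1) m') q)) := rfl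
          rw [hcomp]
          by_cases hq : (q : ℕ) = (p : ℕ) + 1
          · have e1 : (δOH ((p:ℕ)+1) m' (m'+1)) ((σOH (p:ℕ) (m'+1) m') q) =
                Fin.castSucc p := by
              apply Fin.ext
              have := q.isLt
              simp only [δOH_coe, σOH_coe, Fin.coe_castSucc]
              split_ifs <;> omega
            have e2 : q = Fin.succ p := by
              apply Fin.ext
              rw [Fin.val_succ, hq]
            rw [e1, hpe, e2]
          · have e3 : (δOH ((p:ℕ)+1) m' (m'+1)) ((σOH (p:ℕ) (m'+1) m') q) = q := by
              apply Fin.ext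
              have := q.isLt
              have := p.isLt
              simp only [δOH_coe, σOH_coe]
              split_ifs <;> omega
            rw [e3]
        rw [hfact]
        exact G.natP_comp (G.natP_sigma (p:ℕ) hr)
          (ihN m' n (by omega) (θ.comp (δOH ((p:ℕ)+1) m' (m'+1))))

end SGrp
end Paper
open Paper Paper.SGrp in
/-- `H` is a simplicial homotopy from `D_G S_G` to `id_{Diag NG}`:
it is a simplicial map with `ins_0 H = D_G S_G` and `ins_1 H = id`. -/
theorem stmt_16 (G : SGrp) :
    (∀ {m n : ℕ} (θ : Fin (m+1) →o Fin (n+1)) (x : Fin n → G.obj n) (t : Fin (n+1) →o Fin 2),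
      G.diagMap θ (G.Hn n x t) = G.Hn m (G.diagMap θ x) (t.comp θ)) ∧
    (∀ (n : ℕ) (x : Fin n → G.obj n), G.Hn n x (τOH n 0) = G.SGn n (G.DGn n x)) ∧
    (∀ (n : ℕ) (x : Fin n → G.obj n), G.Hn n x (τOH n (n+1)) = x) := by
  refine ⟨fun {m n} θ x t => ?_, G.part2, G.part3⟩
  exact G.natP_all (m + n) m n le_rfl θ x t
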